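/- arXiv:1501.00217 — 4 statements merged into one kernel-verified Lean document; each statement's English description precedes it below -/
import Mathlib

section
/- If ν is a quasistationary distribution of a Markov chain in a set S, then starting from ν, the first exit time τ from S and the exit position X_τ are independent random variables. -/
open MeasureTheory ProbabilityTheory Filter
open scoped Classical

noncomputable section

namespace ParRep

variable {E : Type*} [MeasurableSpace E]

/-- The σ-algebra generated by `X 0, ..., X n`. -/
def past {Ω : Type*} [MeasurableSpace Ω] (X : ℕ → Ω → E) (n : ℕ) : MeasurableSpace Ω :=
  ⨆ i ∈ Finset.range (n + 1), MeasurableSpace.comap (X i) inferInstance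

/-- `X` is a time-homogeneous Markov chain with transition kernel `κ` under `P`:
each `X n` is measurable, `κ` is a Markov kernel, and the conditional law of
`X (n+1)` given the past is `κ (X n)`. -/
def IsMarkov {Ω : Type*} [MeasurableSpace Ω] (P : Measure Ω)
    (X : ℕ → Ω → E) (κ : Kernel E E) : Prop :=
  (∀ n, Measurable (X n)) ∧ IsMarkovKernel κ ∧
  ∀ (n : ℕ) (A : Set E), MeasurableSet A →
    (fun ω => ((κ (X n ω)) A).toReal)
      =ᵐ[P] P[(X (n + 1) ⁻¹' A).indicator (fun _ => (1 : ℝ)) | past X n]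

/-- The first exit time of the chain `X` from the set `S`. -/
def exitTime {Ω : Type*} (X : ℕ → Ω → E) (S : Set E) (ω : Ω) : ℕ :=
  sInf {n | X n ω ∉ S}

/-- The event of surviving in `S` during times `1, ..., n`. -/
def surv {Ω : Type*} (X : ℕ → Ω → E) (S : Set E) (n : ℕ) : Set Ω :=
  ⋂ i ∈ Finset.Icc 1 n, X i ⁻¹' S

/-- `ν` is a quasistationary distribution for the chain `X` in `S` under `P`. -/
def IsQSD {Ω : Type*} [MeasurableSpace Ω] (P : Measure Ω)
    (X : ℕ → Ω → E) (S : Set E) (ν : Measure E) : Prop :=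
  ∀ n, 1 ≤ n → ∀ A : Set E, A ⊆ S → MeasurableSet A →
    P (X n ⁻¹' A ∩ surv X S n) = ν A * P (surv X S n)

/-- `ν` is a QSD for the kernel `κ` in `S`: every chain with kernel `κ` started
from `ν` satisfies the QSD identity. -/
def IsQSDFor (κ : Kernel E E) (S : Set E) (ν : Measure E) : Prop :=
  ∀ (Ω : Type) (_ : MeasurableSpace Ω) (P : Measure Ω) (X : ℕ → Ω → E),
    IsProbabilityMeasure P → IsMarkov P X κ → P.map (X 0) = ν → IsQSD P X S ν

/-- The `n`-step distribution of the chain with kernel `κ` and initial law `μ0`. -/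
def iterMeasure {α : Type*} [MeasurableSpace α] (κ : Kernel α α) (μ0 : Measure α) :
    ℕ → Measure α
  | 0 => μ0
  | n + 1 => (iterMeasure κ μ0 n).bind (fun a => κ a)

/-- The Doeblin-type minorization condition on `S`. -/
def Doeblin (κ : Kernel E E) (S : Set E) (α : ℝ) (lam : Measure E) : Prop :=
  IsProbabilityMeasure lam ∧ lam Sᶜ = 0 ∧
  ∀ x ∈ S, ∀ C : Set E, MeasurableSet C → C ⊆ S →
    ENNReal.ofReal α * lam C ≤ (κ x) C

/-- Uniform ergodicity of the kernel `κ` with limiting measure `μ`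
(total variation expressed as a supremum over measurable sets). -/
def UnifErgodic (κ : Kernel E E) (μ : Measure E) : Prop :=
  IsProbabilityMeasure μ ∧
  ∀ ε : ℝ, 0 < ε → ∃ N : ℕ, ∀ n ≥ N, ∀ ξ : Measure E, IsProbabilityMeasure ξ →
    ∀ A : Set E, MeasurableSet A →
      |(iterMeasure κ ξ n A).toReal - (μ A).toReal| ≤ ε

/-- `κY` is the transition kernel of the extended (ParRep) chain on `E × ℕ`
built from `κ`, the collection `𝒮` of metastable sets, the QSDs `νF`, and the
decorrelation time `Tc` (the counter is capped at `Tc`). -/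
def IsExtKernel (κ : Kernel E E) (𝒮 : Set (Set E)) (νF : Set E → Measure E)
    (Tc : ℕ) (κY : Kernel (E × ℕ) (E × ℕ)) : Prop :=
  (∀ y : E, (∀ S ∈ 𝒮, y ∉ S) → ∀ t : ℕ,
      κY (y, t) = ((κ y).map (fun y' => (y', 0)) : Measure (E × ℕ))) ∧
  (∀ S ∈ 𝒮, ∀ y ∈ S,
    (∀ t : ℕ, t + 1 < Tc →
      κY (y, t) = ((κ y).map (fun y' => (y', if y' ∈ S then t + 1 else 0)) : Measure (E × ℕ))) ∧
    κY (y, Tc - 1) =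
      (((νF S).bind (fun z => κ z)).map (fun y' => (y', if y' ∈ S then Tc else 0)) : Measure (E × ℕ)) ∧
    κY (y, Tc) = ((κ y).map (fun y' => (y', if y' ∈ S then Tc else 0)) : Measure (E × ℕ)))

/-- Harris chain data `(ε, A, B, ρ)` for the kernel `κ`. -/
def IsHarris {σ : Type*} [MeasurableSpace σ] (κ : Kernel σ σ)
    (ε : ℝ) (A B : Set σ) (ρ : Measure σ) : Prop :=
  0 < ε ∧ IsProbabilityMeasure ρ ∧ ρ Bᶜ = 0 ∧
  (∀ x : σ, ∃ n : ℕ, 0 < iterMeasure κ (Measure.dirac x) n A) ∧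
  (∀ x ∈ A, ∀ C : Set σ, MeasurableSet C → C ⊆ B →
    ENNReal.ofReal ε * ρ C ≤ (κ x) C)

/-- `κbar` is the auxiliary (split-chain) kernel on `Option σ` associated with the
Harris chain data `(ε, A, ρ)`; `none` is the regeneration atom. -/
def IsAuxKernel {σ : Type*} [MeasurableSpace σ] (κ : Kernel σ σ)
    (A : Set σ) (ε : ℝ) (ρ : Measure σ)
    (κbar : Kernel (σ ⊕ Unit) (σ ⊕ Unit)) : Prop :=
  (∀ x ∉ A, κbar (Sum.inl x) = ((κ x).map Sum.inl : Measure (σ ⊕ Unit))) ∧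
  (∀ x ∈ A, κbar (Sum.inl x)
      = (((κ x) - (ENNReal.ofReal ε) • ρ).map Sum.inl : Measure (σ ⊕ Unit))
        + (ENNReal.ofReal ε) • Measure.dirac (Sum.inr () : σ ⊕ Unit)) ∧
  (κbar (Sum.inr ()) : Measure (σ ⊕ Unit)) = ρ.bind (fun x => κbar (Sum.inl x))

end ParRep


open scoped ENNReal

/-- If `ν` is a QSD of the Markov chain in `S`, then starting from `ν`
the first exit time from `S` and the exit position are independent. -/
theorem qsd_exit_time_position_independent
    {E Ω : Type*} [MeasurableSpace E] [MeasurableSpace Ω]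
    (P : Measure Ω) [IsProbabilityMeasure P]
    (X : ℕ → Ω → E) (κ : ProbabilityTheory.Kernel E E) (S : Set E) (ν : Measure E)
    (hS : MeasurableSet S)
    (hMarkov : ParRep.IsMarkov P X κ)
    (hν : IsProbabilityMeasure ν) (hsupp : ν Sᶜ = 0)
    (hinit : P.map (X 0) = ν)
    (hQSD : ParRep.IsQSD P X S ν)
    (hp : 0 < P (X 1 ⁻¹' Sᶜ)) :
    ∀ (k : ℕ) (A : Set E), MeasurableSet A →
      P ({ω | ParRep.exitTime X S ω = k} ∩ {ω | X (ParRep.exitTime X S ω) ω ∈ A})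
        = P {ω | ParRep.exitTime X S ω = k}
          * P {ω | X (ParRep.exitTime X S ω) ω ∈ A} := by
  classical
  obtain ⟨hXm, hκ, hcond⟩ := hMarkov
  haveI := hκ
  haveI := hν
  -- past σ-algebra is below the ambient one
  have hpast : ∀ n, ParRep.past X n ≤ ‹MeasurableSpace Ω› := by
    intro n
    refine iSup_le fun i => iSup_le fun _ => ?_
    rintro s ⟨t, ht, rfl⟩
    exact hXm i ht
  have hSmeas : ∀ i, MeasurableSet (X i ⁻¹' S) := fun i => hXm i hS
  have survMeas : ∀ n, MeasurableSet (ParRep.surv X S n) := fun n =>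
    MeasurableSet.iInter fun i => MeasurableSet.iInter fun _ => hSmeas i
  have hsurvPast : ∀ n, MeasurableSet[ParRep.past X n] (ParRep.surv X S n) := by
    intro n
    refine MeasurableSet.iInter fun i => MeasurableSet.iInter fun hi => ?_
    have hle : MeasurableSpace.comap (X i) inferInstance ≤ ParRep.past X n := by
      refine le_iSup₂ (f := fun i (_ : i ∈ Finset.range (n+1)) =>
        MeasurableSpace.comap (X i) inferInstance) i ?_
      simp only [Finset.mem_Icc] at hi
      simp only [Finset.mem_range]
      omega
    exact hle _ ⟨S, hS, rfl⟩
  -- Markov step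
  have hmstep : ∀ (n : ℕ) (B : Set Ω), MeasurableSet[ParRep.past X n] B →
      ∀ (A : Set E), MeasurableSet A →
      P (B ∩ X (n+1) ⁻¹' A) = ∫⁻ ω in B, κ (X n ω) A ∂P := by
    intro n B hB A hA
    have hBm : MeasurableSet B := hpast n B hB
    have hgm : Measurable fun ω => κ (X n ω) A :=
      (Kernel.measurable_coe κ hA).comp (hXm n)
    have hfin : ∀ ω, κ (X n ω) A < ∞ := fun ω =>
      lt_of_le_of_lt prob_le_one ENNReal.one_lt_top
    have hint : Integrable ((X (n+1) ⁻¹' A).indicator (fun _ => (1:ℝ))) P :=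
      (integrable_const 1).indicator (hXm (n+1) hA)
    have h1 : ∫ ω in B, (κ (X n ω) A).toReal ∂P
        = ∫ ω in B, (P[(X (n+1) ⁻¹' A).indicator (fun _ => (1:ℝ)) | ParRep.past X n]) ω ∂P :=
      integral_congr_ae (ae_restrict_of_ae (hcond n A hA))
    have h2 : ∫ ω in B, (P[(X (n+1) ⁻¹' A).indicator (fun _ => (1:ℝ)) | ParRep.past X n]) ω ∂P
        = ∫ ω in B, (X (n+1) ⁻¹' A).indicator (fun _ => (1:ℝ)) ω ∂P :=
      setIntegral_condExp (hpast n) hint hB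
    have h3 : ∫ ω in B, (X (n+1) ⁻¹' A).indicator (fun _ => (1:ℝ)) ω ∂P
        = (P (B ∩ X (n+1) ⁻¹' A)).toReal := by
      rw [setIntegral_indicator (hXm (n+1) hA), setIntegral_const]
      simp
      rfl
    have h4 : ∫ ω in B, (κ (X n ω) A).toReal ∂P = (∫⁻ ω in B, κ (X n ω) A ∂P).toReal :=
      integral_toReal hgm.aemeasurable (ae_of_all _ hfin)
    have h5 : (P (B ∩ X (n+1) ⁻¹' A)).toReal = (∫⁻ ω in B, κ (X n ω) A ∂P).toReal := by
      rw [← h4, h1, h2, h3]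
    have hfin1 : P (B ∩ X (n+1) ⁻¹' A) ≠ ∞ := measure_ne_top P _
    have hfin2 : (∫⁻ ω in B, κ (X n ω) A ∂P) ≠ ∞ := by
      refine ne_of_lt (lt_of_le_of_lt ?_ (lt_of_le_of_lt (prob_le_one (μ := P) (s := B)) ENNReal.one_lt_top))
      calc ∫⁻ ω in B, κ (X n ω) A ∂P ≤ ∫⁻ _ in B, 1 ∂P :=
            lintegral_mono fun ω => prob_le_one
        _ = P B := by simp
    exact (ENNReal.toReal_eq_toReal_iff' hfin1 hfin2).mp h5
  -- QSD identity for all measurable sets and all n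
  have hqsd : ∀ n (B : Set E), MeasurableSet B →
      P (X n ⁻¹' B ∩ ParRep.surv X S n) = ν B * P (ParRep.surv X S n) := by
    intro n B hB
    have hνB : ν (B ∩ S) = ν B := by
      have h0 : ν (B \ S) = 0 := measure_mono_null (fun x hx => hx.2) hsupp
      have h := measure_inter_add_diff (μ := ν) B hS
      rw [h0, add_zero] at h
      exact h
    cases n with
    | zero =>
      have hs0 : ParRep.surv X S 0 = Set.univ := by
        simp [ParRep.surv]
      rw [hs0, Set.inter_univ, measure_univ, mul_one, ← hinit,
        Measure.map_apply (hXm 0) hB]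
    | succ m =>
      have hsub : ParRep.surv X S (m+1) ⊆ X (m+1) ⁻¹' S :=
        Set.iInter₂_subset (m+1) (by simp)
      have hset : X (m+1) ⁻¹' B ∩ ParRep.surv X S (m+1)
          = X (m+1) ⁻¹' (B ∩ S) ∩ ParRep.surv X S (m+1) := by
        ext ω
        constructor
        · rintro ⟨h1, h2⟩; exact ⟨⟨h1, hsub h2⟩, h2⟩
        · rintro ⟨h1, h2⟩; exact ⟨h1.1, h2⟩
      rw [hset, hQSD (m+1) (Nat.succ_le_succ (Nat.zero_le m)) (B ∩ S)
        Set.inter_subset_right (hB.inter hS), hνB]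
  -- transfer lintegrals
  have hlint : ∀ (n : ℕ) (g : E → ℝ≥0∞), Measurable g →
      ∫⁻ ω in ParRep.surv X S n, g (X n ω) ∂P
        = P (ParRep.surv X S n) * ∫⁻ y, g y ∂ν := by
    intro n g hg
    have hmap : (P.restrict (ParRep.surv X S n)).map (X n)
        = P (ParRep.surv X S n) • ν := by
      ext B hB
      rw [Measure.map_apply (hXm n) hB, Measure.restrict_apply (hXm n hB),
        hqsd n B hB, Measure.smul_apply, smul_eq_mul, mul_comm]
    rw [← lintegral_map hg (hXm n), hmap, lintegral_smul_measure, smul_eq_mul]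
  -- the key one-step formula
  have hstar : ∀ (n : ℕ) (A : Set E), MeasurableSet A →
      P (ParRep.surv X S n ∩ X (n+1) ⁻¹' A)
        = P (ParRep.surv X S n) * ∫⁻ y, κ y A ∂ν := by
    intro n A hA
    rw [hmstep n _ (hsurvPast n) A hA,
      hlint n (fun y => κ y A) (Kernel.measurable_coe κ hA)]
  set q : ℝ≥0∞ := ∫⁻ y, κ y Sᶜ ∂ν with hqdef
  set p : ℝ≥0∞ := ∫⁻ y, κ y S ∂ν with hpdef
  have hpq : p + q = 1 := by
    rw [hpdef, hqdef, ← lintegral_add_left (Kernel.measurable_coe κ hS)]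
    have hone : ∀ y, κ y S + κ y Sᶜ = 1 := fun y => by
      rw [measure_add_measure_compl hS, measure_univ]
    simp only [hone]
    simp
  have hq1 : P (X 1 ⁻¹' Sᶜ) = q := by
    have hs0 : ParRep.surv X S 0 = Set.univ := by simp [ParRep.surv]
    have h := hstar 0 Sᶜ hS.compl
    rw [hs0, Set.univ_inter, measure_univ, one_mul] at h
    exact h
  have hq0 : q ≠ 0 := by
    rw [← hq1]; exact hp.ne'
  have hqtop : q ≠ ∞ := by
    refine ne_of_lt (lt_of_le_of_lt ?_ ENNReal.one_lt_top)
    rw [← hpq]; exact le_add_self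
  have hptop : p ≠ ∞ := by
    refine ne_of_lt (lt_of_le_of_lt ?_ ENNReal.one_lt_top)
    rw [← hpq]; exact self_le_add_right p q
  have hplt1 : p < 1 := by
    by_contra hc
    push_neg at hc
    have h1 : (1:ℝ≥0∞) + q ≤ p + q := add_le_add_left hc q
    rw [hpq] at h1
    have h2 : (1:ℝ≥0∞) + q ≤ 1 + 0 := by simpa using h1
    have h3 : q ≤ 0 := (ENNReal.add_le_add_iff_left ENNReal.one_ne_top).mp h2
    exact hq0 (le_antisymm h3 zero_le)
  have hsurv_succ : ∀ n, ParRep.surv X S (n+1)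
      = ParRep.surv X S n ∩ X (n+1) ⁻¹' S := by
    intro n
    have hicc : Finset.Icc 1 (n+1) = insert (n+1) (Finset.Icc 1 n) := by
      ext i
      simp only [Finset.mem_Icc, Finset.mem_insert]
      omega
    rw [ParRep.surv, ParRep.surv, hicc, Finset.set_biInter_insert, Set.inter_comm]
  have hsurvP : ∀ n, P (ParRep.surv X S n) = p ^ n := by
    intro n
    induction n with
    | zero =>
      have hs0 : ParRep.surv X S 0 = Set.univ := by simp [ParRep.surv]
      rw [hs0, measure_univ, pow_zero]
    | succ m ih =>
      rw [hsurv_succ m, hstar m S hS, ih, ← hpdef, pow_succ]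
  set T := ParRep.exitTime X S with hTdef
  -- characterizations of the exit time
  have hT1 : ∀ (k : ℕ) (ω : Ω), T ω = k + 1 ↔
      ((∀ i ≤ k, X i ω ∈ S) ∧ X (k+1) ω ∉ S) := by
    intro k ω
    rw [hTdef]
    unfold ParRep.exitTime
    constructor
    · intro h
      have hne : {n | X n ω ∉ S}.Nonempty := by
        by_contra hc
        rw [Set.not_nonempty_iff_eq_empty] at hc
        rw [hc, Nat.sInf_empty] at h
        omega
      have hmem := Nat.sInf_mem hne
      rw [h] at hmem
      refine ⟨fun i hi => ?_, hmem⟩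
      by_contra hc
      have hle : sInf {n | X n ω ∉ S} ≤ i := Nat.sInf_le hc
      omega
    · rintro ⟨h1, h2⟩
      have hmem : k + 1 ∈ {n | X n ω ∉ S} := h2
      refine le_antisymm (Nat.sInf_le hmem) ?_
      by_contra hc
      push_neg at hc
      have hmem2 := Nat.sInf_mem (Set.nonempty_of_mem hmem)
      exact hmem2 (h1 _ (by omega))
  have hT0 : ∀ ω : Ω, T ω = 0 ↔ (X 0 ω ∉ S ∨ ∀ n, X n ω ∈ S) := by
    intro ω
    rw [hTdef]
    unfold ParRep.exitTime
    rw [Nat.sInf_eq_zero]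
    constructor
    · rintro (h | h)
      · exact Or.inl h
      · right
        intro n
        by_contra hc
        exact Set.notMem_empty n (by rw [← h]; exact hc)
    · rintro (h | h)
      · exact Or.inl h
      · right
        ext n
        simp only [Set.mem_setOf_eq, Set.mem_empty_iff_false, iff_false, not_not]
        exact h n
  -- dropping the null event X 0 ∉ S
  have hX0 : P (X 0 ⁻¹' Sᶜ) = 0 := by
    rw [← hsupp, ← hinit, Measure.map_apply (hXm 0) hS.compl]
  have hdrop : ∀ C : Set Ω, P (X 0 ⁻¹' S ∩ C) = P C := by
    intro C
    refine le_antisymm (measure_mono Set.inter_subset_right) ?_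
    have hsub : C ⊆ (X 0 ⁻¹' S ∩ C) ∪ X 0 ⁻¹' Sᶜ := by
      intro ω hω
      by_cases h : X 0 ω ∈ S
      · exact Or.inl ⟨h, hω⟩
      · exact Or.inr h
    calc P C ≤ P ((X 0 ⁻¹' S ∩ C) ∪ X 0 ⁻¹' Sᶜ) := measure_mono hsub
      _ ≤ P (X 0 ⁻¹' S ∩ C) + P (X 0 ⁻¹' Sᶜ) := measure_union_le _ _
      _ = P (X 0 ⁻¹' S ∩ C) := by rw [hX0, add_zero]
  -- the event {T = k+1} ∩ {X (k+1) ∈ A}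
  have hEvent : ∀ (k : ℕ) (A : Set E),
      {ω | T ω = k + 1} ∩ X (k+1) ⁻¹' A
        = X 0 ⁻¹' S ∩ (ParRep.surv X S k ∩ X (k+1) ⁻¹' (A ∩ Sᶜ)) := by
    intro k A
    ext ω
    simp only [Set.mem_inter_iff, Set.mem_setOf_eq, Set.mem_preimage, hT1,
      ParRep.surv, Set.mem_iInter, Finset.mem_Icc]
    constructor
    · rintro ⟨⟨h1, h2⟩, h3⟩
      exact ⟨h1 0 (Nat.zero_le k), fun i hi => h1 i (by omega), h3, h2⟩
    · rintro ⟨h0, hs, hA', hc⟩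
      refine ⟨⟨fun i hi => ?_, hc⟩, hA'⟩
      rcases Nat.eq_zero_or_pos i with h | h
      · rw [h]; exact h0
      · exact hs i ⟨h, hi⟩
  have hmain : ∀ (k : ℕ) (A : Set E), MeasurableSet A →
      P ({ω | T ω = k + 1} ∩ X (k+1) ⁻¹' A)
        = p ^ k * ∫⁻ y, κ y (A ∩ Sᶜ) ∂ν := by
    intro k A hA
    rw [hEvent k A, hdrop, hstar k (A ∩ Sᶜ) (hA.inter hS.compl), hsurvP k]
  have hTk : ∀ k : ℕ, P {ω | T ω = k + 1} = p ^ k * q := by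
    intro k
    have h := hmain k Set.univ MeasurableSet.univ
    rw [Set.preimage_univ, Set.inter_univ, Set.univ_inter, ← hqdef] at h
    exact h
  -- P(T = 0) = 0
  have hPT0 : P {ω | T ω = 0} = 0 := by
    have hiInf : P (⋂ n, ParRep.surv X S n) = 0 := by
      have hle : ∀ n, P (⋂ m, ParRep.surv X S m) ≤ p ^ n := fun n =>
        (measure_mono (Set.iInter_subset _ n)).trans (hsurvP n).le
      have htend : Tendsto (fun n : ℕ => p ^ n) atTop (nhds 0) :=
        ENNReal.tendsto_pow_atTop_nhds_zero_of_lt_one hplt1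
      exact le_antisymm (ge_of_tendsto' htend hle) zero_le
    have hsub : {ω | T ω = 0} ⊆ X 0 ⁻¹' Sᶜ ∪ ⋂ n, ParRep.surv X S n := by
      intro ω hω
      rcases (hT0 ω).mp hω with h | h
      · exact Or.inl h
      · exact Or.inr (Set.mem_iInter.mpr fun n =>
          Set.mem_iInter.mpr fun i => Set.mem_iInter.mpr fun _ => h i)
    refine le_antisymm ?_ zero_le
    calc P {ω | T ω = 0} ≤ P (X 0 ⁻¹' Sᶜ ∪ ⋂ n, ParRep.surv X S n) :=
          measure_mono hsub
      _ ≤ P (X 0 ⁻¹' Sᶜ) + P (⋂ n, ParRep.surv X S n) := measure_union_le _ _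
      _ = 0 := by rw [hX0, hiInf, add_zero]
  -- measurability of level sets of T
  have hTmeas : ∀ k, MeasurableSet {ω | T ω = k} := by
    intro k
    cases k with
    | zero =>
      have hset : {ω | T ω = 0} = X 0 ⁻¹' Sᶜ ∪ ⋂ n, X n ⁻¹' S := by
        ext ω
        simp only [Set.mem_setOf_eq, hT0, Set.mem_union, Set.mem_preimage,
          Set.mem_compl_iff, Set.mem_iInter]
      rw [hset]
      exact (hXm 0 hS.compl).union (MeasurableSet.iInter fun n => hXm n hS)
    | succ k =>
      have hset : {ω | T ω = k + 1}
          = (⋂ i, ⋂ (_ : i ≤ k), X i ⁻¹' S) ∩ X (k+1) ⁻¹' Sᶜ := by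
        ext ω
        simp only [Set.mem_setOf_eq, hT1, Set.mem_inter_iff, Set.mem_iInter,
          Set.mem_preimage, Set.mem_compl_iff]
      rw [hset]
      exact (MeasurableSet.iInter fun i =>
        MeasurableSet.iInter fun _ => hXm i hS).inter (hXm (k+1) hS.compl)
  -- decomposition of the exit-position event
  have hXTA : ∀ A : Set E,
      {ω | X (T ω) ω ∈ A} = ⋃ k, ({ω | T ω = k} ∩ X k ⁻¹' A) := by
    intro A
    ext ω
    simp only [Set.mem_setOf_eq, Set.mem_iUnion, Set.mem_inter_iff, Set.mem_preimage]
    constructor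
    · intro h; exact ⟨T ω, rfl, h⟩
    · rintro ⟨k, hk, h⟩; rw [hk]; exact h
  have hPXT : ∀ A : Set E, MeasurableSet A →
      P {ω | X (T ω) ω ∈ A} = (∫⁻ y, κ y (A ∩ Sᶜ) ∂ν) * q⁻¹ := by
    intro A hA
    have hdisj : Pairwise (Function.onFun Disjoint
        (fun k => {ω | T ω = k} ∩ X k ⁻¹' A)) := by
      intro i j hij
      refine Set.disjoint_left.mpr ?_
      rintro ω ⟨h1, _⟩ ⟨h2, _⟩
      exact hij (h1.symm.trans h2)
    have hmeas' : ∀ k, MeasurableSet ({ω | T ω = k} ∩ X k ⁻¹' A) :=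
      fun k => (hTmeas k).inter (hXm k hA)
    have hdisj2 : Pairwise (Function.onFun Disjoint
        (fun k => {ω | T ω = k + 1} ∩ X (k+1) ⁻¹' A)) := by
      intro i j hij
      refine Set.disjoint_left.mpr ?_
      rintro ω ⟨h1, _⟩ ⟨h2, _⟩
      have h3 := h1.symm.trans h2
      exact hij (by omega)
    have hU : {ω | X (T ω) ω ∈ A}
        = (⋃ k, ({ω | T ω = k + 1} ∩ X (k+1) ⁻¹' A))
          ∪ ({ω | T ω = 0} ∩ X 0 ⁻¹' A) := by
      rw [hXTA A]
      ext ω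
      simp only [Set.mem_iUnion, Set.mem_union, Set.mem_inter_iff,
        Set.mem_setOf_eq, Set.mem_preimage]
      constructor
      · rintro ⟨k, hk, h⟩
        cases k with
        | zero => exact Or.inr ⟨hk, h⟩
        | succ m => exact Or.inl ⟨m, hk, h⟩
      · rintro (⟨m, hm, h⟩ | ⟨h0, h⟩)
        · exact ⟨m + 1, hm, h⟩
        · exact ⟨0, h0, h⟩
    have h0 : P ({ω | T ω = 0} ∩ X 0 ⁻¹' A) = 0 :=
      measure_mono_null Set.inter_subset_left hPT0
    have hPU : P {ω | X (T ω) ω ∈ A}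
        = P (⋃ k, ({ω | T ω = k + 1} ∩ X (k+1) ⁻¹' A)) := by
      rw [hU]
      refine le_antisymm ?_ (measure_mono Set.subset_union_left)
      calc P ((⋃ k, ({ω | T ω = k + 1} ∩ X (k+1) ⁻¹' A))
              ∪ ({ω | T ω = 0} ∩ X 0 ⁻¹' A))
          ≤ P (⋃ k, ({ω | T ω = k + 1} ∩ X (k+1) ⁻¹' A))
            + P ({ω | T ω = 0} ∩ X 0 ⁻¹' A) := measure_union_le _ _
        _ = P (⋃ k, ({ω | T ω = k + 1} ∩ X (k+1) ⁻¹' A)) := by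
            rw [h0, add_zero]
    rw [hPU,
      measure_iUnion hdisj2 (fun k => hmeas' (k+1)),
      tsum_congr (fun k => hmain k A hA),
      ENNReal.tsum_mul_right, ENNReal.tsum_geometric]
    have hsubq : (1:ℝ≥0∞) - p = q := by
      rw [← hpq, ENNReal.add_sub_cancel_left hptop]
    rw [hsubq, mul_comm]
  -- conclusion
  intro k A hA
  have hEq : {ω | T ω = k} ∩ {ω | X (T ω) ω ∈ A}
      = {ω | T ω = k} ∩ X k ⁻¹' A := by
    ext ω
    simp only [Set.mem_inter_iff, Set.mem_setOf_eq, Set.mem_preimage]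
    constructor
    · rintro ⟨h1, h2⟩; rw [h1] at h2; exact ⟨h1, h2⟩
    · rintro ⟨h1, h2⟩; refine ⟨h1, ?_⟩; rw [h1]; exact h2
  rw [hEq, hPXT A hA]
  cases k with
  | zero =>
    rw [hPT0, zero_mul]
    exact measure_mono_null Set.inter_subset_left hPT0
  | succ m =>
    rw [hmain m A hA, hTk m, mul_assoc]
    have hx : q * ((∫⁻ y, κ y (A ∩ Sᶜ) ∂ν) * q⁻¹) = ∫⁻ y, κ y (A ∩ Sᶜ) ∂ν := by
      rw [mul_comm ((∫⁻ y, κ y (A ∩ Sᶜ) ∂ν)) q⁻¹, ← mul_assoc,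
        ENNReal.mul_inv_cancel hq0 hqtop, one_mul]
    rw [hx]
end
end

section
/- With exact QSD sampling in the Dephasing Step, the pair (τ_acc, X_acc) produced by the Parallel Step of ParRep has the same joint law as (τ, X_τ), where (X_n) starts from the QSD ν in S and τ is its first exit time from S. -/
open MeasureTheory ProbabilityTheory Filter
open scoped Classical

noncomputable section

set_option linter.unusedSectionVars false
open scoped ENNReal

namespace ParRepAux

open ParRep

variable {E : Type*} [MeasurableSpace E] {Ω : Type*} [MeasurableSpace Ω]
variable {P : Measure Ω} {κ : Kernel E E} {S : Set E} {ν : Measure E} {X : ℕ → Ω → E}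

lemma measure_inter_left_of_compl_null {F G : Set Ω} (h : P Fᶜ = 0) : P (F ∩ G) = P G := by
  refine le_antisymm (measure_mono Set.inter_subset_right) ?_
  calc P G ≤ P ((F ∩ G) ∪ Fᶜ) := measure_mono (fun x hx => by
        by_cases hF : x ∈ F
        · exact Or.inl ⟨hF, hx⟩
        · exact Or.inr hF)
    _ ≤ P (F ∩ G) + P Fᶜ := measure_union_le _ _
    _ = P (F ∩ G) := by rw [h, add_zero]

lemma measure_inter_right_of_compl_null {F G : Set Ω} (h : P Gᶜ = 0) : P (F ∩ G) = P F := by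
  rw [Set.inter_comm]; exact measure_inter_left_of_compl_null h

lemma past_le (hX : ∀ n, Measurable (X n)) (n : ℕ) :
    past X n ≤ (inferInstance : MeasurableSpace Ω) :=
  iSup₂_le fun i _ => (hX i).comap_le

lemma measurableSet_past {u n : ℕ} (h : u ≤ n) {A : Set E} (hA : MeasurableSet A) :
    MeasurableSet[past X n] (X u ⁻¹' A) := by
  have h1 : MeasurableSet[MeasurableSpace.comap (X u) inferInstance] (X u ⁻¹' A) := ⟨A, hA, rfl⟩
  have h2 : MeasurableSpace.comap (X u) inferInstance ≤ past X n :=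
    le_iSup₂ (f := fun i (_ : i ∈ Finset.range (n + 1)) =>
      MeasurableSpace.comap (X i) inferInstance) u (Finset.mem_range.2 (by omega))
  exact h2 _ h1

lemma measurableSet_surv_past (hS : MeasurableSet S) (n : ℕ) :
    MeasurableSet[past X n] (surv X S n) := by
  refine MeasurableSet.iInter fun i => MeasurableSet.iInter fun hi => ?_
  exact measurableSet_past (Finset.mem_Icc.1 hi).2 hS

lemma measurableSet_surv (hX : ∀ n, Measurable (X n)) (hS : MeasurableSet S) (n : ℕ) :
    MeasurableSet (surv X S n) :=
  past_le hX n _ (measurableSet_surv_past hS n)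

lemma markov_step [IsProbabilityMeasure P] (hM : IsMarkov P X κ) {B : Set E}
    (hB : MeasurableSet B) {n : ℕ} {F : Set Ω} (hF : MeasurableSet[past X n] F) :
    P (F ∩ X (n + 1) ⁻¹' B) = ∫⁻ ω in F, κ (X n ω) B ∂P := by
  obtain ⟨hX, hκ, hcond⟩ := hM
  have hm : past X n ≤ (inferInstance : MeasurableSpace Ω) := past_le hX n
  have hFm : MeasurableSet F := hm _ hF
  have hXB : MeasurableSet (X (n + 1) ⁻¹' B) := (hX _) hB
  have hf : Integrable ((X (n + 1) ⁻¹' B).indicator (fun _ => (1 : ℝ))) P :=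
    (integrable_indicator_iff hXB).2 (integrableOn_const (measure_ne_top _ _))
  have h1 : ∫ ω in F, ((X (n + 1) ⁻¹' B).indicator (fun _ => (1 : ℝ))) ω ∂P
      = (P (F ∩ X (n + 1) ⁻¹' B)).toReal := by
    rw [setIntegral_indicator hXB, setIntegral_const, smul_eq_mul, mul_one]; rfl
  have h2 : ∫ ω in F, (P[(X (n + 1) ⁻¹' B).indicator (fun _ => (1 : ℝ)) | past X n]) ω ∂P
      = ∫ ω in F, ((X (n + 1) ⁻¹' B).indicator (fun _ => (1 : ℝ))) ω ∂P :=
    setIntegral_condExp hm hf hF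
  have h3 : ∫ ω in F, (κ (X n ω) B).toReal ∂P
      = ∫ ω in F, (P[(X (n + 1) ⁻¹' B).indicator (fun _ => (1 : ℝ)) | past X n]) ω ∂P :=
    integral_congr_ae (ae_restrict_of_ae (hcond n B hB))
  have hmeasκ : Measurable fun ω => κ (X n ω) B := (Kernel.measurable_coe κ hB).comp (hX n)
  have h4 : ∫ ω in F, (κ (X n ω) B).toReal ∂P = (∫⁻ ω in F, κ (X n ω) B ∂P).toReal := by
    refine integral_toReal hmeasκ.aemeasurable ?_
    refine Filter.Eventually.of_forall fun ω => ?_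
    have : IsProbabilityMeasure (κ (X n ω)) := hκ.isProbabilityMeasure _
    exact lt_of_le_of_lt prob_le_one ENNReal.one_lt_top
  have hfin1 : P (F ∩ X (n + 1) ⁻¹' B) ≠ ⊤ := measure_ne_top _ _
  have hfin2 : (∫⁻ ω in F, κ (X n ω) B ∂P) ≠ ⊤ := by
    refine ne_of_lt (lt_of_le_of_lt ?_ ENNReal.one_lt_top)
    calc (∫⁻ ω in F, κ (X n ω) B ∂P) ≤ ∫⁻ _ in F, 1 ∂P := by
          refine lintegral_mono fun ω => ?_
          have : IsProbabilityMeasure (κ (X n ω)) := hκ.isProbabilityMeasure _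
          exact prob_le_one
      _ = P F := by rw [setLIntegral_one]
      _ ≤ 1 := prob_le_one
  have h5 : (∫⁻ ω in F, κ (X n ω) B ∂P).toReal = (P (F ∩ X (n + 1) ⁻¹' B)).toReal :=
    h4.symm.trans (h3.trans (h2.trans h1))
  exact ((ENNReal.toReal_eq_toReal_iff' hfin2 hfin1).1 h5).symm


lemma surv_zero : surv X S 0 = Set.univ := by
  simp [surv, Finset.Icc_eq_empty (by omega : ¬ (1:ℕ) ≤ 0)]

lemma surv_succ (n : ℕ) : surv X S (n + 1) = X (n + 1) ⁻¹' S ∩ surv X S n := by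
  ext ω
  simp only [surv, Set.mem_iInter, Finset.mem_Icc, Set.mem_inter_iff, Set.mem_preimage]
  constructor
  · intro h
    exact ⟨h _ ⟨by omega, by omega⟩, fun i hi => h i ⟨hi.1, by omega⟩⟩
  · rintro ⟨h1, h2⟩ i hi
    rcases Nat.lt_or_ge i (n + 1) with h | h
    · exact h2 i ⟨hi.1, by omega⟩
    · have : i = n + 1 := by omega
      exact this ▸ h1

lemma surv_subset {n : ℕ} (hn : 1 ≤ n) : surv X S n ⊆ X n ⁻¹' S := by
  intro ω hω
  simp only [surv, Set.mem_iInter] at hω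
  exact hω n (Finset.mem_Icc.2 ⟨hn, le_refl n⟩)

lemma restrict_map [IsProbabilityMeasure P] (hX : ∀ n, Measurable (X n))
    (hS : MeasurableSet S) (hQ : IsQSD P X S ν) (hinit : P.map (X 0) = ν)
    (hsupp : ν Sᶜ = 0) (n : ℕ) :
    (P.restrict (surv X S n)).map (X n) = P (surv X S n) • ν := by
  rcases n with _ | n
  · rw [surv_zero, Measure.restrict_univ, hinit, measure_univ, one_smul]
  · refine Measure.ext fun A hA => ?_
    rw [Measure.map_apply (hX _) hA, Measure.restrict_apply ((hX _) hA)]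
    have hsub : surv X S (n + 1) ⊆ X (n + 1) ⁻¹' S := surv_subset (by omega)
    have heq : X (n + 1) ⁻¹' A ∩ surv X S (n + 1)
        = X (n + 1) ⁻¹' (A ∩ S) ∩ surv X S (n + 1) := by
      ext ω
      constructor
      · rintro ⟨h1, h2⟩; exact ⟨⟨h1, hsub h2⟩, h2⟩
      · rintro ⟨h1, h2⟩; exact ⟨h1.1, h2⟩
    rw [heq, hQ (n + 1) (by omega) (A ∩ S) Set.inter_subset_right (hA.inter hS)]
    have hνA : ν (A ∩ S) = ν A := by
      have h1 : ν (A ∩ S) + ν (A \ S) = ν A := measure_inter_add_diff A hS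
      have h2 : ν (A \ S) = 0 := measure_mono_null (fun x hx => hx.2) hsupp
      rw [h2, add_zero] at h1
      exact h1
    rw [Measure.smul_apply, smul_eq_mul, hνA, mul_comm]

lemma step_formula [IsProbabilityMeasure P] (hM : IsMarkov P X κ)
    (hS : MeasurableSet S) (hQ : IsQSD P X S ν) (hinit : P.map (X 0) = ν)
    (hsupp : ν Sᶜ = 0) {B : Set E} (hB : MeasurableSet B) (n : ℕ) :
    P (surv X S n ∩ X (n + 1) ⁻¹' B) = P (surv X S n) * ∫⁻ x, κ x B ∂ν := by
  have hX := hM.1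
  rw [markov_step hM hB (measurableSet_surv_past hS n)]
  have h1 : ∫⁻ ω in surv X S n, κ (X n ω) B ∂P
      = ∫⁻ x, κ x B ∂((P.restrict (surv X S n)).map (X n)) :=
    (lintegral_map (Kernel.measurable_coe κ hB) (hX n)).symm
  rw [h1, restrict_map hX hS hQ hinit hsupp, lintegral_smul_measure, smul_eq_mul]

lemma surv_prob [IsProbabilityMeasure P] (hM : IsMarkov P X κ)
    (hS : MeasurableSet S) (hQ : IsQSD P X S ν) (hinit : P.map (X 0) = ν)
    (hsupp : ν Sᶜ = 0) (n : ℕ) :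
    P (surv X S n) = (∫⁻ x, κ x S ∂ν) ^ n := by
  induction n with
  | zero => simp [surv_zero]
  | succ n ih =>
    rw [surv_succ, Set.inter_comm, step_formula hM hS hQ hinit hsupp hS, ih, pow_succ]

lemma range_inter (t : ℕ) :
    (⋂ u ∈ Finset.range (t + 1), X u ⁻¹' S) = X 0 ⁻¹' S ∩ surv X S t := by
  ext ω
  simp only [Set.mem_iInter, Finset.mem_range, Set.mem_inter_iff, Set.mem_preimage, surv,
    Finset.mem_Icc]
  constructor
  · intro h
    exact ⟨h 0 (by omega), fun i hi => h i (by omega)⟩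
  · rintro ⟨h0, h⟩ u hu
    rcases Nat.eq_zero_or_pos u with h' | h'
    · exact h' ▸ h0
    · exact h u ⟨h', by omega⟩

lemma init_compl_null [IsProbabilityMeasure P] (hX : ∀ n, Measurable (X n))
    (hS : MeasurableSet S) (hinit : P.map (X 0) = ν) (hsupp : ν Sᶜ = 0) :
    P (X 0 ⁻¹' Sᶜ) = 0 := by
  rw [← Measure.map_apply (hX 0) hS.compl, hinit]; exact hsupp

lemma exit_prob [IsProbabilityMeasure P] (hM : IsMarkov P X κ)
    (hS : MeasurableSet S) (hQ : IsQSD P X S ν) (hinit : P.map (X 0) = ν)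
    (hsupp : ν Sᶜ = 0) {A : Set E} (hA : MeasurableSet A) (s : ℕ) :
    P ((⋂ u ∈ Finset.range (s + 1), X u ⁻¹' S) ∩ X (s + 1) ⁻¹' (Sᶜ ∩ A))
      = (∫⁻ x, κ x S ∂ν) ^ s * ∫⁻ x, κ x (Sᶜ ∩ A) ∂ν := by
  have hX := hM.1
  rw [range_inter, Set.inter_assoc,
    measure_inter_left_of_compl_null (by rw [← Set.preimage_compl]; exact init_compl_null hX hS hinit hsupp),
    step_formula hM hS hQ hinit hsupp (hS.compl.inter hA),
    surv_prob hM hS hQ hinit hsupp]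

lemma noexit_null [IsProbabilityMeasure P] (hM : IsMarkov P X κ)
    (hS : MeasurableSet S) (hQ : IsQSD P X S ν) (hinit : P.map (X 0) = ν)
    (hsupp : ν Sᶜ = 0) (hg : (∫⁻ x, κ x S ∂ν) < 1) :
    P (⋂ n, X n ⁻¹' S) = 0 := by
  have hX := hM.1
  have hb : ∀ n, P (⋂ m, X m ⁻¹' S) ≤ (∫⁻ x, κ x S ∂ν) ^ n := by
    intro n
    rw [← surv_prob hM hS hQ hinit hsupp n]
    refine measure_mono fun ω hω => ?_
    simp only [Set.mem_iInter, Set.mem_preimage] at hω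
    simp only [surv, Set.mem_iInter, Set.mem_preimage]
    exact fun i _ => hω i
  have ht : Tendsto (fun n => (∫⁻ x, κ x S ∂ν) ^ n) atTop (nhds 0) :=
    ENNReal.tendsto_pow_atTop_nhds_zero_of_lt_one hg
  have := ge_of_tendsto ht (Filter.Eventually.of_forall hb)
  exact le_antisymm this zero_le

lemma tail_prob [IsProbabilityMeasure P] (hM : IsMarkov P X κ)
    (hS : MeasurableSet S) (hQ : IsQSD P X S ν) (hinit : P.map (X 0) = ν)
    (hsupp : ν Sᶜ = 0) (hg : (∫⁻ x, κ x S ∂ν) < 1) (s : ℕ) :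
    P ((⋃ n, X n ⁻¹' Sᶜ) ∩ ⋂ u ∈ Finset.range (s + 1), X u ⁻¹' S)
      = (∫⁻ x, κ x S ∂ν) ^ s := by
  have hX := hM.1
  have hZ : P (⋂ n, X n ⁻¹' S) = 0 := noexit_null hM hS hQ hinit hsupp hg
  have hev : (⋃ n, X n ⁻¹' Sᶜ) ∩ (⋂ u ∈ Finset.range (s + 1), X u ⁻¹' S)
      = (⋂ u ∈ Finset.range (s + 1), X u ⁻¹' S) \ (⋂ n, X n ⁻¹' S) := by
    ext ω
    simp only [Set.mem_inter_iff, Set.mem_iUnion, Set.mem_preimage, Set.mem_compl_iff,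
      Set.mem_iInter, Set.mem_diff, Finset.mem_range]
    constructor
    · rintro ⟨⟨n, hn⟩, h2⟩
      exact ⟨h2, fun hall => hn (hall n)⟩
    · rintro ⟨h1, h2⟩
      rcases not_forall.1 h2 with ⟨n, hn⟩
      exact ⟨⟨n, hn⟩, h1⟩
  rw [hev, measure_diff_null hZ, range_inter,
    measure_inter_left_of_compl_null (by rw [← Set.preimage_compl]; exact init_compl_null hX hS hinit hsupp),
    surv_prob hM hS hQ hinit hsupp]

lemma allin_null [IsProbabilityMeasure P] (hM : IsMarkov P X κ)
    (hS : MeasurableSet S) (hQ : IsQSD P X S ν) (hinit : P.map (X 0) = ν)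
    (hsupp : ν Sᶜ = 0) (hg : (∫⁻ x, κ x S ∂ν) = 1) :
    P (⋃ n, X n ⁻¹' Sᶜ) = 0 := by
  have hX := hM.1
  refine measure_iUnion_null fun n => ?_
  rcases n with _ | n
  · exact init_compl_null hX hS hinit hsupp
  · have hsub : X (n + 1) ⁻¹' Sᶜ ⊆ (surv X S (n + 1))ᶜ := by
      intro ω hω hsurv
      exact hω (surv_subset (by omega) hsurv)
    refine measure_mono_null hsub ?_
    rw [measure_compl (measurableSet_surv hX hS _) (measure_ne_top _ _),
      surv_prob hM hS hQ hinit hsupp, hg, one_pow, measure_univ, tsub_self]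


section SInfLemmas

variable {α : Type*}

lemma sInf_exit_eq_iff {f : ℕ → α} {S : Set α} (hne : ∃ n, f n ∉ S) {t : ℕ} :
    sInf {n | f n ∉ S} = t ↔ (∀ u < t, f u ∈ S) ∧ f t ∉ S := by
  have hne' : {n | f n ∉ S}.Nonempty := hne
  constructor
  · rintro rfl
    refine ⟨fun u hu => ?_, Nat.sInf_mem hne'⟩
    by_contra h
    exact absurd (Nat.sInf_le h) (not_le.2 hu)
  · rintro ⟨h1, h2⟩
    refine le_antisymm (Nat.sInf_le h2) ?_
    by_contra h
    push_neg at h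
    exact (Nat.sInf_mem hne') (h1 _ h)

lemma lt_sInf_exit_iff {f : ℕ → α} {S : Set α} (hne : ∃ n, f n ∉ S) {s : ℕ} :
    s < sInf {n | f n ∉ S} ↔ ∀ u ≤ s, f u ∈ S := by
  constructor
  · intro h u hu
    by_contra hc
    have := Nat.sInf_le (show u ∈ {n | f n ∉ S} from hc)
    omega
  · intro h
    by_contra hc
    push_neg at hc
    exact (Nat.sInf_mem hne) (h _ hc)

lemma sInf_exit_eq_zero_iff {f : ℕ → α} {S : Set α} :
    sInf {n | f n ∉ S} = 0 ↔ (f 0 ∉ S ∨ ∀ n, f n ∈ S) := by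
  rw [Nat.sInf_eq_zero]
  constructor
  · rintro (h | h)
    · exact Or.inl h
    · right
      intro n
      by_contra hn
      exact (Set.eq_empty_iff_forall_notMem.1 h n) hn
  · rintro (h | h)
    · exact Or.inl h
    · exact Or.inr (Set.eq_empty_iff_forall_notMem.2 fun n hn => hn (h n))

end SInfLemmas

section Arith

lemma M_facts (N T : ℕ) (hN : 0 < N) (hT : 0 < T) (τf : ℕ → ℕ)
    (hτ : ∀ j, j < N → 1 ≤ τf j) (M : ℕ)
    (hM : M = sInf {m' | 1 ≤ m' ∧ ∃ j, j < N ∧ τf j ≤ m' * T}) :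
    1 ≤ M ∧ (∃ j, j < N ∧ τf j ≤ M * T) ∧ (∀ j, j < N → (M - 1) * T < τf j) := by
  have hne : {m' | 1 ≤ m' ∧ ∃ j, j < N ∧ τf j ≤ m' * T}.Nonempty := by
    refine ⟨τf 0, ⟨hτ 0 hN, 0, hN, ?_⟩⟩
    calc τf 0 = τf 0 * 1 := (mul_one _).symm
      _ ≤ τf 0 * T := Nat.mul_le_mul_left _ hT
  have hmem := Nat.sInf_mem hne
  rw [← hM] at hmem
  refine ⟨hmem.1, hmem.2, ?_⟩
  intro j hj
  rcases Nat.eq_or_lt_of_le hmem.1 with h1 | h1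
  · have hz : (M - 1) * T = 0 := by
      have : M - 1 = 0 := by omega
      rw [this, zero_mul]
    rw [hz]
    exact hτ j hj
  · have hlt : M - 1 < sInf {m' | 1 ≤ m' ∧ ∃ j, j < N ∧ τf j ≤ m' * T} := by
      rw [← hM]; omega
    by_contra hc
    push_neg at hc
    exact Nat.notMem_of_lt_sInf hlt ⟨by omega, j, hj, hc⟩

lemma K_facts (N T : ℕ) (τf : ℕ → ℕ) (M K : ℕ)
    (hex : ∃ j, j < N ∧ τf j ≤ M * T)
    (hK : K = sInf {j | j < N ∧ τf j ≤ M * T}) :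
    K < N ∧ τf K ≤ M * T ∧ (∀ j, j < K → M * T < τf j) := by
  have hne : {j | j < N ∧ τf j ≤ M * T}.Nonempty := hex
  have hmem := Nat.sInf_mem hne
  rw [← hK] at hmem
  have hKN := hmem.1
  refine ⟨hmem.1, hmem.2, fun j hj => ?_⟩
  have hlt : j < sInf {j | j < N ∧ τf j ≤ M * T} := by rw [← hK]; omega
  by_contra hc
  push_neg at hc
  exact Nat.notMem_of_lt_sInf hlt ⟨by omega, hc⟩

lemma euclid_unique {T q1 r1 q2 r2 : ℕ} (hT : 0 < T) (hr1 : r1 < T) (hr2 : r2 < T)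
    (h : q1 * T + r1 = q2 * T + r2) : q1 = q2 ∧ r1 = r2 := by
  have h1 : (q1 * T + r1) / T = q1 := by
    rw [Nat.add_comm, Nat.add_mul_div_right _ _ hT, Nat.div_eq_of_lt hr1, Nat.zero_add]
  have h2 : (q2 * T + r2) / T = q2 := by
    rw [Nat.add_comm, Nat.add_mul_div_right _ _ hT, Nat.div_eq_of_lt hr2, Nat.zero_add]
  have h3 : (q1 * T + r1) % T = r1 := by
    rw [Nat.add_comm, Nat.add_mul_mod_self_right, Nat.mod_eq_of_lt hr1]
  have h4 : (q2 * T + r2) % T = r2 := by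
    rw [Nat.add_comm, Nat.add_mul_mod_self_right, Nat.mod_eq_of_lt hr2]
  exact ⟨by rw [← h1, ← h2, h], by rw [← h3, ← h4, h]⟩

lemma keyA (N T : ℕ) (hN : 0 < N) (hT : 0 < T) (τf : ℕ → ℕ)
    (hτ : ∀ j, j < N → 1 ≤ τf j) (k m i t : ℕ) (hi : i < N) (hm : 1 ≤ m)
    (ht1 : (m - 1) * T < t) (ht2 : t ≤ m * T)
    (hk : k = N * ((m - 1) * T) + i * T + (t - (m - 1) * T))
    (M K : ℕ) (hM : M = sInf {m' | 1 ≤ m' ∧ ∃ j, j < N ∧ τf j ≤ m' * T})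
    (hK : K = sInf {j | j < N ∧ τf j ≤ M * T}) :
    (N * (M - 1) * T + K * T + (τf K - (M - 1) * T) = k) ↔ (M = m ∧ K = i ∧ τf i = t) := by
  obtain ⟨hM1, hex, hMlow⟩ := M_facts N T hN hT τf hτ M hM
  obtain ⟨hKN, hKle, hKlow⟩ := K_facts N T τf M K hex hK
  have hMT : M * T = (M - 1) * T + T := by
    calc M * T = (M - 1 + 1) * T := by rw [Nat.sub_add_cancel hM1]
      _ = (M - 1) * T + T := by rw [add_mul, one_mul]
  have hmT : m * T = (m - 1) * T + T := by
    calc m * T = (m - 1 + 1) * T := by rw [Nat.sub_add_cancel hm]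
      _ = (m - 1) * T + T := by rw [add_mul, one_mul]
  have hKa : (M - 1) * T < τf K := hMlow K hKN
  constructor
  · intro heq
    have l0 : N * (M - 1) * T = N * ((M - 1) * T) := mul_assoc N (M - 1) T
    have l1 : (N * (M - 1) + K) * T = N * ((M - 1) * T) + K * T := by ring
    have l2 : (N * (m - 1) + i) * T = N * ((m - 1) * T) + i * T := by ring
    have e1 : (N * (M - 1) + K) * T + (τf K - (M - 1) * T - 1)
        = (N * (m - 1) + i) * T + (t - (m - 1) * T - 1) := by omega
    have hr1 : τf K - (M - 1) * T - 1 < T := by omega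
    have hr2 : t - (m - 1) * T - 1 < T := by omega
    obtain ⟨hq, hr⟩ := euclid_unique hT hr1 hr2 e1
    have c1 : N * (M - 1) = (M - 1) * N := Nat.mul_comm _ _
    have c2 : N * (m - 1) = (m - 1) * N := Nat.mul_comm _ _
    have e2 : (M - 1) * N + K = (m - 1) * N + i := by omega
    obtain ⟨hq2, hKi⟩ := euclid_unique hN hKN hi e2
    have hMm : M = m := by omega
    have heqT : (M - 1) * T = (m - 1) * T := by rw [hMm]
    have hτK : τf K = τf i := by rw [hKi]
    exact ⟨hMm, hKi, by omega⟩
  · rintro ⟨h1, h2, h3⟩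
    rw [h1, h2, h3, hk]
    have l0 : N * (m - 1) * T = N * ((m - 1) * T) := mul_assoc N (m - 1) T
    omega

lemma keyB (N T : ℕ) (hN : 0 < N) (hT : 0 < T) (τf : ℕ → ℕ)
    (hτ : ∀ j, j < N → 1 ≤ τf j) (m i t : ℕ) (hi : i < N) (hm : 1 ≤ m)
    (ht1 : (m - 1) * T < t) (ht2 : t ≤ m * T)
    (M K : ℕ) (hM : M = sInf {m' | 1 ≤ m' ∧ ∃ j, j < N ∧ τf j ≤ m' * T})
    (hK : K = sInf {j | j < N ∧ τf j ≤ M * T})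
    (hc1 : ∀ j, j < i → m * T < τf j) (hc2 : τf i = t)
    (hc3 : ∀ j, i < j → j < N → (m - 1) * T < τf j) :
    M = m ∧ K = i := by
  have hsub : (m - 1) * T ≤ m * T := Nat.mul_le_mul_right T (by omega)
  have hall : ∀ j, j < N → (m - 1) * T < τf j := by
    intro j hj
    rcases lt_trichotomy j i with h | h | h
    · have := hc1 j h; omega
    · subst h; omega
    · exact hc3 j h hj
  have hMm : M = m := by
    have hmem : m ∈ {m' | 1 ≤ m' ∧ ∃ j, j < N ∧ τf j ≤ m' * T} := ⟨hm, i, hi, by omega⟩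
    have hle : M ≤ m := by rw [hM]; exact Nat.sInf_le hmem
    by_contra hne
    have hlt : M < m := by omega
    obtain ⟨hM1, hex, _⟩ := M_facts N T hN hT τf hτ M hM
    obtain ⟨j, hj, hjle⟩ := hex
    have h1 : τf j ≤ (m - 1) * T := le_trans hjle (Nat.mul_le_mul_right T (by omega))
    have h2 := hall j hj
    omega
  rw [hMm] at hK
  refine ⟨hMm, ?_⟩
  have hmem : i ∈ {j | j < N ∧ τf j ≤ m * T} := ⟨hi, by omega⟩
  have hle : K ≤ i := by rw [hK]; exact Nat.sInf_le hmem
  rcases Nat.eq_or_lt_of_le hle with h | h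
  · exact h
  · exfalso
    obtain ⟨hKN, hKle, _⟩ := K_facts N T τf m K ⟨i, hi, by omega⟩ hK
    have := hc1 K h
    omega

lemma key0 (N T : ℕ) (hN : 0 < N) (hT : 0 < T) (τf : ℕ → ℕ)
    (M K : ℕ) (hM : M = sInf {m' | 1 ≤ m' ∧ ∃ j, j < N ∧ τf j ≤ m' * T})
    (hK : K = sInf {j | j < N ∧ τf j ≤ M * T}) :
    (N * (M - 1) * T + K * T + (τf K - (M - 1) * T) = 0) ↔ τf 0 = 0 := by
  constructor
  · intro h
    have h1 : K * T = 0 := by omega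
    have hK0 : K = 0 := by
      rcases Nat.mul_eq_zero.1 h1 with h' | h'
      · exact h'
      · omega
    have h2 : N * (M - 1) * T = 0 := by omega
    have hM1 : M - 1 = 0 := by
      rcases Nat.mul_eq_zero.1 h2 with h' | h'
      · rcases Nat.mul_eq_zero.1 h' with h'' | h''
        · omega
        · exact h''
      · omega
    have h3 : τf K - (M - 1) * T = 0 := by omega
    rw [hK0, hM1, zero_mul] at h3
    omega
  · intro h0
    have hmemM : 1 ∈ {m' | 1 ≤ m' ∧ ∃ j, j < N ∧ τf j ≤ m' * T} :=
      ⟨le_refl 1, 0, hN, by omega⟩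
    have hMv : M = 1 := by
      have hle : M ≤ 1 := by rw [hM]; exact Nat.sInf_le hmemM
      have hmem2 := Nat.sInf_mem (⟨1, hmemM⟩ : Set.Nonempty {m' | 1 ≤ m' ∧ ∃ j, j < N ∧ τf j ≤ m' * T})
      rw [← hM] at hmem2
      have := hmem2.1
      omega
    have hKv : K = 0 := by
      have hmem : 0 ∈ {j | j < N ∧ τf j ≤ M * T} := ⟨hN, by omega⟩
      have hle : K ≤ 0 := by rw [hK]; exact Nat.sInf_le hmem
      omega
    rw [hMv, hKv, h0]
    simp

lemma key0' (N T : ℕ) (hN : 0 < N) (hT : 0 < T) (τf : ℕ → ℕ)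
    (M K : ℕ) (hM : M = sInf {m' | 1 ≤ m' ∧ ∃ j, j < N ∧ τf j ≤ m' * T})
    (hK : K = sInf {j | j < N ∧ τf j ≤ M * T}) (h0 : τf 0 = 0) :
    M = 1 ∧ K = 0 := by
  have hmemM : 1 ∈ {m' | 1 ≤ m' ∧ ∃ j, j < N ∧ τf j ≤ m' * T} :=
    ⟨le_refl 1, 0, hN, by omega⟩
  have hMv : M = 1 := by
    have hle : M ≤ 1 := by rw [hM]; exact Nat.sInf_le hmemM
    have hmem2 := Nat.sInf_mem (⟨1, hmemM⟩ : Set.Nonempty {m' | 1 ≤ m' ∧ ∃ j, j < N ∧ τf j ≤ m' * T})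
    rw [← hM] at hmem2
    have := hmem2.1
    omega
  refine ⟨hMv, ?_⟩
  have hmem : 0 ∈ {j | j < N ∧ τf j ≤ M * T} := ⟨hN, by omega⟩
  have hle : K ≤ 0 := by rw [hK]; exact Nat.sInf_le hmem
  omega

lemma key_pos (N T : ℕ) (hN : 0 < N) (hT : 0 < T) (τf : ℕ → ℕ) (M K : ℕ)
    (hM : M = sInf {m' | 1 ≤ m' ∧ ∃ j, j < N ∧ τf j ≤ m' * T})
    (hK : K = sInf {j | j < N ∧ τf j ≤ M * T})
    (h : 1 ≤ N * (M - 1) * T + K * T + (τf K - (M - 1) * T)) :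
    ∃ j, j < N ∧ 1 ≤ τf j := by
  by_contra hc
  push_neg at hc
  have h0 : τf 0 = 0 := by have := hc 0 hN; omega
  have := (key0 N T hN hT τf M K hM hK).2 h0
  omega

end Arith

section PathSets

def TB (S : Set E) (s : ℕ) : Set (ℕ → E) :=
  (⋃ n, {f : ℕ → E | f n ∉ S}) ∩ ⋂ u ∈ Finset.range (s + 1), {f : ℕ → E | f u ∈ S}

def EB (S A : Set E) (t : ℕ) : Set (ℕ → E) :=
  (⋂ u ∈ Finset.range t, {f : ℕ → E | f u ∈ S}) ∩ {f : ℕ → E | f t ∈ Sᶜ ∩ A}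

lemma measurableSet_TB {S : Set E} (hS : MeasurableSet S) (s : ℕ) : MeasurableSet (TB S s) := by
  refine MeasurableSet.inter ?_ ?_
  · exact MeasurableSet.iUnion fun n =>
      show MeasurableSet ((fun f : ℕ → E => f n) ⁻¹' Sᶜ) from measurable_pi_apply n hS.compl
  · exact MeasurableSet.iInter fun u => MeasurableSet.iInter fun _ =>
      show MeasurableSet ((fun f : ℕ → E => f u) ⁻¹' S) from measurable_pi_apply u hS

lemma measurableSet_EB {S A : Set E} (hS : MeasurableSet S) (hA : MeasurableSet A) (t : ℕ) :
    MeasurableSet (EB S A t) := by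
  refine MeasurableSet.inter ?_ ?_
  · exact MeasurableSet.iInter fun u => MeasurableSet.iInter fun _ =>
      show MeasurableSet ((fun f : ℕ → E => f u) ⁻¹' S) from measurable_pi_apply u hS
  · exact show MeasurableSet ((fun f : ℕ → E => f t) ⁻¹' (Sᶜ ∩ A)) from
      measurable_pi_apply t (hS.compl.inter hA)

lemma mem_TB_iff {S : Set E} {f : ℕ → E} (hne : ∃ n, f n ∉ S) (s : ℕ) :
    f ∈ TB S s ↔ s < sInf {n | f n ∉ S} := by
  rw [lt_sInf_exit_iff hne]
  simp only [TB, Set.mem_inter_iff, Set.mem_iUnion, Set.mem_setOf_eq, Set.mem_iInter,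
    Finset.mem_range]
  constructor
  · rintro ⟨-, h2⟩ u hu
    exact h2 u (by omega)
  · intro h
    exact ⟨hne, fun u hu => h u (by omega)⟩

lemma mem_EB_iff {S A : Set E} {f : ℕ → E} {t : ℕ} (ht : 1 ≤ t) :
    f ∈ EB S A t ↔ (sInf {n | f n ∉ S} = t ∧ f t ∈ A) := by
  simp only [EB, Set.mem_inter_iff, Set.mem_iInter, Finset.mem_range, Set.mem_setOf_eq,
    Set.mem_compl_iff]
  constructor
  · rintro ⟨h1, h2, h3⟩
    exact ⟨(sInf_exit_eq_iff ⟨t, h2⟩).2 ⟨fun u hu => h1 u hu, h2⟩, h3⟩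
  · rintro ⟨h1, h2⟩
    have hne : ∃ n, f n ∉ S := by
      by_contra hc
      push_neg at hc
      have h0 : sInf {n | f n ∉ S} = 0 := sInf_exit_eq_zero_iff.2 (Or.inr hc)
      omega
    obtain ⟨ha, hb⟩ := (sInf_exit_eq_iff hne).1 h1
    exact ⟨fun u hu => ha u hu, hb, h2⟩

lemma preimage_TB {Ω : Type*} (Y : ℕ → Ω → E) (S : Set E) (s : ℕ) :
    (fun ω (n : ℕ) => Y n ω) ⁻¹' TB S s
      = (⋃ n, Y n ⁻¹' Sᶜ) ∩ ⋂ u ∈ Finset.range (s + 1), Y u ⁻¹' S := by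
  ext ω
  simp [TB]

lemma preimage_EB {Ω : Type*} (Y : ℕ → Ω → E) (S A : Set E) (t : ℕ) :
    (fun ω (n : ℕ) => Y n ω) ⁻¹' EB S A t
      = (⋂ u ∈ Finset.range t, Y u ⁻¹' S) ∩ Y t ⁻¹' (Sᶜ ∩ A) := by
  ext ω
  simp [EB]

end PathSets

lemma prod_split {Mo : Type*} [CommMonoid Mo] (N i : ℕ) (hi : i < N) (f : ℕ → Mo) (x y z : Mo)
    (hx : ∀ j, j < i → f j = x) (hy : f i = y) (hz : ∀ j, i < j → j < N → f j = z) :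
    ∏ j ∈ Finset.range N, f j = x ^ i * y * z ^ (N - i - 1) := by
  rw [Finset.range_eq_Ico, ← Finset.prod_Ico_consecutive f (Nat.zero_le i) hi.le]
  have h1 : ∏ j ∈ Finset.Ico 0 i, f j = x ^ i := by
    rw [Finset.prod_congr rfl fun j hj => hx j (Finset.mem_Ico.1 hj).2, Finset.prod_const,
      Nat.card_Ico, Nat.sub_zero]
  have h2 : ∏ j ∈ Finset.Ico i N, f j = y * z ^ (N - i - 1) := by
    rw [Finset.prod_eq_prod_Ico_succ_bot hi f, hy]
    congr 1
    rw [Finset.prod_congr rfl fun j hj => hz j (Finset.mem_Ico.1 hj).1 (Finset.mem_Ico.1 hj).2,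
      Finset.prod_const, Nat.card_Ico]
    congr 1
  rw [h1, h2, mul_assoc]

end ParRepAux

/-- With exact QSD sampling in the Dephasing Step, the pair
`(τacc, Xacc)` produced by the Parallel Step has the same joint law as `(τ, X τ)` for
the chain started from the QSD `ν` in `S`. -/
theorem parallel_step_exit_law
    {E Ω Ω' : Type*} [MeasurableSpace E] [MeasurableSpace Ω] [MeasurableSpace Ω']
    (P : Measure Ω) [IsProbabilityMeasure P]
    (P' : Measure Ω') [IsProbabilityMeasure P']
    (κ : ProbabilityTheory.Kernel E E)
    (S : Set E) (hS : MeasurableSet S)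
    (ν : Measure E) (hν : IsProbabilityMeasure ν) (hsupp : ν Sᶜ = 0)
    (N : ℕ) (hN : 1 ≤ N) (Tpoll : ℕ) (hT : 1 ≤ Tpoll)
    (X : ℕ → ℕ → Ω → E)
    (hindep : ProbabilityTheory.iIndepFun (fun (i : ℕ) => fun ω (n : ℕ) => X i n ω) P)
    (hMarkov : ∀ i < N, ParRep.IsMarkov P (X i) κ)
    (hinit : ∀ i < N, P.map (X i 0) = ν)
    (hQSD : ∀ i < N, ParRep.IsQSD P (X i) S ν)
    (τ : ℕ → Ω → ℕ) (hτ : ∀ i ω, τ i ω = ParRep.exitTime (X i) S ω)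
    (M : Ω → ℕ) (hM : ∀ ω, M ω = sInf {m | 1 ≤ m ∧ ∃ i < N, τ i ω ≤ m * Tpoll})
    (K : Ω → ℕ) (hK : ∀ ω, K ω = sInf {i | i < N ∧ τ i ω ≤ M ω * Tpoll})
    (τacc : Ω → ℕ)
    (hτacc : ∀ ω, τacc ω
      = N * (M ω - 1) * Tpoll + K ω * Tpoll + (τ (K ω) ω - (M ω - 1) * Tpoll))
    (Xacc : Ω → E) (hXacc : ∀ ω, Xacc ω = X (K ω) (τ (K ω) ω) ω)
    (X' : ℕ → Ω' → E) (hMarkov' : ParRep.IsMarkov P' X' κ)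
    (hinit' : P'.map (X' 0) = ν) (hQSD' : ParRep.IsQSD P' X' S ν) :
    ∀ (k : ℕ) (A : Set E), MeasurableSet A →
      P ({ω | τacc ω = k} ∩ {ω | Xacc ω ∈ A})
        = P' ({ω | ParRep.exitTime X' S ω = k}
            ∩ {ω | X' (ParRep.exitTime X' S ω) ω ∈ A}) := by
  classical
  intro k A hA
  have hX'm : ∀ n, Measurable (X' n) := hMarkov'.1
  haveI : IsMarkovKernel κ := hMarkov'.2.1
  have hNpos : 0 < N := hN
  have hTpos : 0 < Tpoll := hT
  set g : ℝ≥0∞ := ∫⁻ x, κ x S ∂ν with hgdef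
  set hAi : ℝ≥0∞ := ∫⁻ x, κ x (Sᶜ ∩ A) ∂ν with hAidef
  have hg_le : g ≤ 1 := by
    rw [hgdef]
    calc ∫⁻ x, κ x S ∂ν ≤ ∫⁻ _, 1 ∂ν := lintegral_mono fun x => prob_le_one
      _ = 1 := by rw [lintegral_one, measure_univ]
  have hinitnull : ∀ j, j < N → P (X j 0 ⁻¹' Sᶜ) = 0 := fun j hj =>
    ParRepAux.init_compl_null (hMarkov j hj).1 hS (hinit j hj) hsupp
  -- RHS event rewriting
  have hRHSev : ∀ t : ℕ, {ω | ParRep.exitTime X' S ω = t}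
        ∩ {ω | X' (ParRep.exitTime X' S ω) ω ∈ A}
      = {ω | ParRep.exitTime X' S ω = t} ∩ X' t ⁻¹' A := by
    intro t
    ext ω
    simp only [Set.mem_inter_iff, Set.mem_setOf_eq, Set.mem_preimage]
    constructor
    · rintro ⟨h1, h2⟩
      exact ⟨h1, by rw [← h1]; exact h2⟩
    · rintro ⟨h1, h2⟩
      exact ⟨h1, by rw [h1]; exact h2⟩
  -- RHS value for positive exit times
  have hRHS1 : ∀ s : ℕ,
      P' ({ω | ParRep.exitTime X' S ω = s + 1} ∩ X' (s + 1) ⁻¹' A) = g ^ s * hAi := by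
    intro s
    have hev : {ω | ParRep.exitTime X' S ω = s + 1} ∩ X' (s + 1) ⁻¹' A
        = (⋂ u ∈ Finset.range (s + 1), X' u ⁻¹' S) ∩ X' (s + 1) ⁻¹' (Sᶜ ∩ A) := by
      ext ω
      simp only [Set.mem_inter_iff, Set.mem_setOf_eq, Set.mem_iInter, Finset.mem_range,
        Set.mem_preimage, Set.mem_compl_iff]
      constructor
      · rintro ⟨h1, h2⟩
        have hne : ∃ n, X' n ω ∉ S := by
          by_contra hc
          push_neg at hc
          have h0 : ParRep.exitTime X' S ω = 0 :=
            ParRepAux.sInf_exit_eq_zero_iff.2 (Or.inr hc)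
          omega
        obtain ⟨ha, hb⟩ := (ParRepAux.sInf_exit_eq_iff hne).1 h1
        exact ⟨fun u hu => ha u hu, hb, h2⟩
      · rintro ⟨h1, h2, h3⟩
        have heq : ParRep.exitTime X' S ω = s + 1 :=
          (ParRepAux.sInf_exit_eq_iff ⟨s + 1, h2⟩).2 ⟨fun u hu => h1 u hu, h2⟩
        exact ⟨heq, h3⟩
    rw [hev, ParRepAux.exit_prob hMarkov' hS hQSD' hinit' hsupp hA s, ← hgdef, ← hAidef]
  rcases Nat.eq_zero_or_pos k with hk0 | hk1
  · -- k = 0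
    subst hk0
    have hLev : {ω | τacc ω = 0} ∩ {ω | Xacc ω ∈ A}
        = {ω | τ 0 ω = 0} ∩ X 0 0 ⁻¹' A := by
      ext ω
      simp only [Set.mem_inter_iff, Set.mem_setOf_eq, Set.mem_preimage]
      constructor
      · rintro ⟨h1, h2⟩
        rw [hτacc] at h1
        have hz := (ParRepAux.key0 N Tpoll hNpos hTpos (fun j => τ j ω) (M ω) (K ω)
          (hM ω) (hK ω)).1 h1
        obtain ⟨hM1, hK0⟩ := ParRepAux.key0' N Tpoll hNpos hTpos (fun j => τ j ω) (M ω) (K ω)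
          (hM ω) (hK ω) hz
        refine ⟨hz, ?_⟩
        rw [hXacc, hK0, hz] at h2
        exact h2
      · rintro ⟨h1, h2⟩
        obtain ⟨hM1, hK0⟩ := ParRepAux.key0' N Tpoll hNpos hTpos (fun j => τ j ω) (M ω) (K ω)
          (hM ω) (hK ω) h1
        refine ⟨?_, ?_⟩
        · rw [hτacc]
          exact (ParRepAux.key0 N Tpoll hNpos hTpos (fun j => τ j ω) (M ω) (K ω)
            (hM ω) (hK ω)).2 h1
        · rw [hXacc, hK0, h1]
          exact h2
    rw [hLev, hRHSev 0]
    rcases eq_or_lt_of_le hg_le with hg1 | hglt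
    · -- g = 1
      have hgi : (∫⁻ x, κ x S ∂ν) = 1 := hgdef.symm.trans hg1
      have hbad0 : P (⋃ n, X 0 n ⁻¹' Sᶜ) = 0 :=
        ParRepAux.allin_null (hMarkov 0 hNpos) hS (hQSD 0 hNpos) (hinit 0 hNpos) hsupp hgi
      have hcompl : P ({ω | τ 0 ω = 0}ᶜ) = 0 := by
        refine measure_mono_null ?_ hbad0
        intro ω hω
        simp only [Set.mem_compl_iff, Set.mem_setOf_eq] at hω
        by_contra hc
        simp only [Set.mem_iUnion, Set.mem_preimage, Set.mem_compl_iff] at hc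
        push_neg at hc
        refine hω ?_
        rw [hτ]
        exact ParRepAux.sInf_exit_eq_zero_iff.2 (Or.inr hc)
      have hbad0' : P' (⋃ n, X' n ⁻¹' Sᶜ) = 0 :=
        ParRepAux.allin_null hMarkov' hS hQSD' hinit' hsupp hgi
      have hcompl' : P' ({ω | ParRep.exitTime X' S ω = 0}ᶜ) = 0 := by
        refine measure_mono_null ?_ hbad0'
        intro ω hω
        simp only [Set.mem_compl_iff, Set.mem_setOf_eq] at hω
        by_contra hc
        simp only [Set.mem_iUnion, Set.mem_preimage, Set.mem_compl_iff] at hc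
        push_neg at hc
        exact hω (ParRepAux.sInf_exit_eq_zero_iff.2 (Or.inr hc))
      rw [ParRepAux.measure_inter_left_of_compl_null hcompl,
        ParRepAux.measure_inter_left_of_compl_null hcompl',
        ← Measure.map_apply ((hMarkov 0 hNpos).1 0) hA, ← Measure.map_apply (hX'm 0) hA,
        hinit 0 hNpos, hinit']
    · -- g < 1
      have hgi : (∫⁻ x, κ x S ∂ν) < 1 := by rw [← hgdef]; exact hglt
      have hn1 : P (⋂ n, X 0 n ⁻¹' S) = 0 :=
        ParRepAux.noexit_null (hMarkov 0 hNpos) hS (hQSD 0 hNpos) (hinit 0 hNpos) hsupp hgi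
      have hn1' : P' (⋂ n, X' n ⁻¹' S) = 0 :=
        ParRepAux.noexit_null hMarkov' hS hQSD' hinit' hsupp hgi
      have hLzero : P ({ω | τ 0 ω = 0} ∩ X 0 0 ⁻¹' A) = 0 := by
        have hsub : {ω | τ 0 ω = 0} ∩ X 0 0 ⁻¹' A
            ⊆ X 0 0 ⁻¹' Sᶜ ∪ ⋂ n, X 0 n ⁻¹' S := by
          rintro ω ⟨h1, -⟩
          simp only [Set.mem_setOf_eq] at h1
          rw [hτ] at h1
          rcases ParRepAux.sInf_exit_eq_zero_iff.1 h1 with h | h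
          · exact Or.inl h
          · exact Or.inr (Set.mem_iInter.2 fun n => h n)
        exact measure_mono_null hsub (measure_union_null (hinitnull 0 hNpos) hn1)
      have hRzero : P' ({ω | ParRep.exitTime X' S ω = 0} ∩ X' 0 ⁻¹' A) = 0 := by
        have hsub : {ω | ParRep.exitTime X' S ω = 0} ∩ X' 0 ⁻¹' A
            ⊆ X' 0 ⁻¹' Sᶜ ∪ ⋂ n, X' n ⁻¹' S := by
          rintro ω ⟨h1, -⟩
          simp only [Set.mem_setOf_eq] at h1
          rcases ParRepAux.sInf_exit_eq_zero_iff.1 h1 with h | h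
          · exact Or.inl h
          · exact Or.inr (Set.mem_iInter.2 fun n => h n)
        refine measure_mono_null hsub (measure_union_null ?_ hn1')
        exact ParRepAux.init_compl_null hX'm hS hinit' hsupp
      rw [hLzero, hRzero]
  · -- k ≥ 1
    obtain ⟨s, rfl⟩ : ∃ s, k = s + 1 := ⟨k - 1, by omega⟩
    rw [hRHSev (s + 1), hRHS1 s]
    rcases eq_or_lt_of_le hg_le with hg1 | hglt
    · -- g = 1 : both sides zero
      have hgi : (∫⁻ x, κ x S ∂ν) = 1 := hgdef.symm.trans hg1
      have hsum : (∫⁻ x, κ x S ∂ν) + ∫⁻ x, κ x Sᶜ ∂ν = 1 := by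
        rw [← lintegral_add_left (κ.measurable_coe hS)]
        have heq : (fun x => κ x S + κ x Sᶜ) = fun _ => (1 : ℝ≥0∞) := by
          funext x
          rw [measure_add_measure_compl hS, measure_univ]
        rw [heq, lintegral_one, measure_univ]
      have hc0 : ∫⁻ x, κ x Sᶜ ∂ν = 0 := by
        rw [hgi] at hsum
        have h2 : (1 : ℝ≥0∞) + ∫⁻ x, κ x Sᶜ ∂ν = 1 + 0 := by rw [add_zero]; exact hsum
        exact (ENNReal.add_right_inj ENNReal.one_ne_top).1 h2
      have hAi0 : hAi = 0 := by
        rw [hAidef]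
        exact le_antisymm
          (le_trans (lintegral_mono fun x => measure_mono Set.inter_subset_left) hc0.le)
          zero_le
      have hbad : ∀ j, j < N → P (⋃ n, X j n ⁻¹' Sᶜ) = 0 := fun j hj =>
        ParRepAux.allin_null (hMarkov j hj) hS (hQSD j hj) (hinit j hj) hsupp hgi
      have hLzero : P ({ω | τacc ω = s + 1} ∩ {ω | Xacc ω ∈ A}) = 0 := by
        have hsub : {ω | τacc ω = s + 1} ∩ {ω | Xacc ω ∈ A}
            ⊆ ⋃ j ∈ Finset.range N, ⋃ n, X j n ⁻¹' Sᶜ := by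
          rintro ω ⟨h1, -⟩
          simp only [Set.mem_setOf_eq] at h1
          rw [hτacc] at h1
          obtain ⟨j, hj, hτj⟩ := ParRepAux.key_pos N Tpoll hNpos hTpos (fun j => τ j ω)
            (M ω) (K ω) (hM ω) (hK ω)
            (show 1 ≤ N * (M ω - 1) * Tpoll + K ω * Tpoll
              + (τ (K ω) ω - (M ω - 1) * Tpoll) by omega)
          have hex : ∃ n, X j n ω ∉ S := by
            by_contra hc
            push_neg at hc
            have hz : τ j ω = 0 := by
              rw [hτ]
              exact ParRepAux.sInf_exit_eq_zero_iff.2 (Or.inr hc)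
            omega
          obtain ⟨n, hn⟩ := hex
          simp only [Set.mem_iUnion, Set.mem_preimage, Set.mem_compl_iff, Finset.mem_range]
          exact ⟨j, hj, n, hn⟩
        refine measure_mono_null hsub ?_
        exact (measure_biUnion_null_iff (Finset.range N).countable_toSet).2
          fun j hj => hbad j (Finset.mem_range.1 hj)
      rw [hLzero, hAi0, mul_zero]
    · -- g < 1 : the main case
      have hgi : (∫⁻ x, κ x S ∂ν) < 1 := by rw [← hgdef]; exact hglt
      set q := s / Tpoll with hq
      set r := s % Tpoll with hr
      set mm := q / N + 1 with hmm
      set ii := q % N with hii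
      set b := (q / N) * Tpoll with hb
      set tt := b + r + 1 with htt
      have hrT : r < Tpoll := Nat.mod_lt _ hTpos
      have hiiN : ii < N := Nat.mod_lt _ hNpos
      have hmm1 : 1 ≤ mm := by rw [hmm]; exact Nat.le_add_left 1 _
      have hbmm : (mm - 1) * Tpoll = b := by
        have h1 : mm - 1 = q / N := by omega
        rw [h1, hb]
      have hmmT : mm * Tpoll = b + Tpoll := by
        rw [hmm, add_mul, one_mul, hb]
      have ht1 : (mm - 1) * Tpoll < tt := by rw [hbmm]; omega
      have ht2 : tt ≤ mm * Tpoll := by omega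
      have htt1 : 1 ≤ tt := by omega
      have hdq : Tpoll * q + r = s := by rw [hq, hr]; exact Nat.div_add_mod s Tpoll
      have hdn : N * (q / N) + ii = q := by rw [hii]; exact Nat.div_add_mod q N
      have e1 : N * b = N * (q / N) * Tpoll := by
        rw [hb]
        exact (mul_assoc _ _ _).symm
      have e2 : N * (q / N) * Tpoll + ii * Tpoll = q * Tpoll := by
        rw [hii, ← add_mul, hdn]
      have e3 : q * Tpoll = Tpoll * q := mul_comm _ _
      have hs : s = N * b + ii * Tpoll + r := by omega
      have hkdec : s + 1 = N * ((mm - 1) * Tpoll) + ii * Tpoll + (tt - (mm - 1) * Tpoll) := by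
        rw [hbmm]
        omega
      set Cs : ℕ → Set (ℕ → E) := fun j =>
        if j < ii then ParRepAux.TB S (mm * Tpoll)
        else if j = ii then ParRepAux.EB S A tt
        else ParRepAux.TB S ((mm - 1) * Tpoll) with hCs
      have hCsMeas : ∀ j ∈ Finset.range N, MeasurableSet (Cs j) := by
        intro j _
        rw [hCs]
        dsimp only
        split_ifs
        · exact ParRepAux.measurableSet_TB hS _
        · exact ParRepAux.measurableSet_EB hS hA _
        · exact ParRepAux.measurableSet_TB hS _
      set Gd : Set Ω := ⋂ j ∈ Finset.range N, (X j 0 ⁻¹' S ∩ ⋃ n, X j n ⁻¹' Sᶜ) with hGd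
      have hGc : P Gdᶜ = 0 := by
        have hcompl : Gdᶜ = ⋃ j ∈ Finset.range N, (X j 0 ⁻¹' S ∩ ⋃ n, X j n ⁻¹' Sᶜ)ᶜ := by
          rw [hGd]
          simp [Set.compl_iInter]
        rw [hcompl]
        refine (measure_biUnion_null_iff (Finset.range N).countable_toSet).2 fun j hj => ?_
        have hjN := Finset.mem_range.1 hj
        rw [Set.compl_inter]
        refine measure_union_null ?_ ?_
        · rw [← Set.preimage_compl]
          exact hinitnull j hjN
        · have hcc : (⋃ n, X j n ⁻¹' Sᶜ)ᶜ = ⋂ n, X j n ⁻¹' S := by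
            simp [Set.compl_iUnion]
          rw [hcc]
          exact ParRepAux.noexit_null (hMarkov j hjN) hS (hQSD j hjN) (hinit j hjN) hsupp hgi
      have hset : ∀ ω, ω ∈ Gd → ((τacc ω = s + 1 ∧ Xacc ω ∈ A)
          ↔ ∀ j, j < N → ω ∈ (fun ω (n : ℕ) => X j n ω) ⁻¹' Cs j) := by
        intro ω hωG
        have hGmem : ∀ j, j < N → (X j 0 ω ∈ S ∧ ∃ n, X j n ω ∉ S) := by
          intro j hj
          rw [hGd] at hωG
          simp only [Set.mem_iInter, Finset.mem_range, Set.mem_inter_iff, Set.mem_preimage,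
            Set.mem_iUnion, Set.mem_compl_iff] at hωG
          exact hωG j hj
        have hτ1 : ∀ j, j < N → 1 ≤ τ j ω := by
          intro j hj
          by_contra hc
          have h0 : τ j ω = 0 := by omega
          rw [hτ] at h0
          rcases ParRepAux.sInf_exit_eq_zero_iff.1 h0 with h | h
          · exact h (hGmem j hj).1
          · obtain ⟨n, hn⟩ := (hGmem j hj).2
            exact hn (h n)
        have hmemT : ∀ j, j < N → ∀ s' : ℕ,
            (ω ∈ (fun ω (n : ℕ) => X j n ω) ⁻¹' ParRepAux.TB S s' ↔ s' < τ j ω) := by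
          intro j hj s'
          rw [hτ]
          exact ParRepAux.mem_TB_iff (hGmem j hj).2 s'
        have hmemE : ω ∈ (fun ω (n : ℕ) => X ii n ω) ⁻¹' ParRepAux.EB S A tt
            ↔ (τ ii ω = tt ∧ X ii tt ω ∈ A) := by
          rw [hτ]
          exact ParRepAux.mem_EB_iff htt1
        obtain ⟨hM1ω, hexω, hMlowω⟩ := ParRepAux.M_facts N Tpoll hNpos hTpos (fun j => τ j ω)
          hτ1 (M ω) (hM ω)
        obtain ⟨hKNω, hKleω, hKlowω⟩ := ParRepAux.K_facts N Tpoll (fun j => τ j ω) (M ω) (K ω)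
          hexω (hK ω)
        have hkeyA := ParRepAux.keyA N Tpoll hNpos hTpos (fun j => τ j ω) hτ1 (s + 1) mm ii tt
          hiiN hmm1 ht1 ht2 hkdec (M ω) (K ω) (hM ω) (hK ω)
        constructor
        · rintro ⟨h1, h2⟩
          rw [hτacc] at h1
          obtain ⟨hMeq, hKeq, hτii⟩ := hkeyA.1 h1
          intro j hj
          rw [hCs]
          dsimp only
          by_cases hji : j < ii
          · rw [if_pos hji, hmemT j hj _]
            have hlow := hKlowω j (by rw [hKeq]; exact hji)
            rw [hMeq] at hlow
            exact hlow
          · by_cases hje : j = ii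
            · rw [if_neg hji, if_pos hje]
              subst hje
              rw [hmemE]
              have hτii' : τ ii ω = tt := hτii
              refine ⟨hτii', ?_⟩
              rw [hXacc, hKeq, hτii'] at h2
              exact h2
            · rw [if_neg hji, if_neg hje, hmemT j hj _]
              have hlow := hMlowω j hj
              rw [hMeq] at hlow
              exact hlow
        · intro hmem
          have hc1 : ∀ j, j < ii → mm * Tpoll < τ j ω := by
            intro j hj
            have hmj := hmem j (by omega)
            rw [hCs] at hmj
            dsimp only at hmj
            rw [if_pos hj] at hmj
            exact (hmemT j (by omega) _).1 hmj
          have hc2 : τ ii ω = tt ∧ X ii tt ω ∈ A := by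
            have hmj := hmem ii hiiN
            rw [hCs] at hmj
            dsimp only at hmj
            rw [if_neg (lt_irrefl ii), if_pos rfl] at hmj
            exact hmemE.1 hmj
          have hc3 : ∀ j, ii < j → j < N → (mm - 1) * Tpoll < τ j ω := by
            intro j hj1 hj2
            have hmj := hmem j hj2
            rw [hCs] at hmj
            dsimp only at hmj
            rw [if_neg (by omega), if_neg (by omega)] at hmj
            exact (hmemT j hj2 _).1 hmj
          obtain ⟨hMeq, hKeq⟩ := ParRepAux.keyB N Tpoll hNpos hTpos (fun j => τ j ω) hτ1
            mm ii tt hiiN hmm1 ht1 ht2 (M ω) (K ω) (hM ω) (hK ω) hc1 hc2.1 hc3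
          refine ⟨?_, ?_⟩
          · rw [hτacc]
            exact hkeyA.2 ⟨hMeq, hKeq, hc2.1⟩
          · rw [hXacc, hKeq, hc2.1]
            exact hc2.2
      have hsetEq : ({ω | τacc ω = s + 1} ∩ {ω | Xacc ω ∈ A}) ∩ Gd
          = (⋂ j ∈ Finset.range N, (fun ω (n : ℕ) => X j n ω) ⁻¹' Cs j) ∩ Gd := by
        ext ω
        simp only [Set.mem_inter_iff, Set.mem_setOf_eq, Set.mem_iInter, Finset.mem_range]
        constructor
        · rintro ⟨⟨h1, h2⟩, hG⟩
          exact ⟨fun j hj => (hset ω hG).1 ⟨h1, h2⟩ j hj, hG⟩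
        · rintro ⟨hmem, hG⟩
          exact ⟨(hset ω hG).2 hmem, hG⟩
      calc P ({ω | τacc ω = s + 1} ∩ {ω | Xacc ω ∈ A})
          = P (({ω | τacc ω = s + 1} ∩ {ω | Xacc ω ∈ A}) ∩ Gd) :=
            (ParRepAux.measure_inter_right_of_compl_null hGc).symm
        _ = P ((⋂ j ∈ Finset.range N, (fun ω (n : ℕ) => X j n ω) ⁻¹' Cs j) ∩ Gd) := by
            rw [hsetEq]
        _ = P (⋂ j ∈ Finset.range N, (fun ω (n : ℕ) => X j n ω) ⁻¹' Cs j) :=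
            ParRepAux.measure_inter_right_of_compl_null hGc
        _ = ∏ j ∈ Finset.range N, P ((fun ω (n : ℕ) => X j n ω) ⁻¹' Cs j) :=
            hindep.measure_inter_preimage_eq_mul (Finset.range N) hCsMeas
        _ = (g ^ (mm * Tpoll)) ^ ii * (g ^ (tt - 1) * hAi)
              * (g ^ ((mm - 1) * Tpoll)) ^ (N - ii - 1) := by
            refine ParRepAux.prod_split N ii hiiN _ _ _ _ ?_ ?_ ?_
            · intro j hj
              rw [hCs]
              dsimp only
              rw [if_pos hj, ParRepAux.preimage_TB, hgdef]
              exact ParRepAux.tail_prob (hMarkov j (by omega)) hS (hQSD j (by omega))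
                (hinit j (by omega)) hsupp hgi (mm * Tpoll)
            · rw [hCs]
              dsimp only
              rw [if_neg (lt_irrefl ii), if_pos rfl, ParRepAux.preimage_EB]
              obtain ⟨s0, hs0⟩ : ∃ s0, tt = s0 + 1 := ⟨tt - 1, by omega⟩
              rw [hs0]
              simp only [Nat.add_sub_cancel]
              rw [hgdef, hAidef]
              exact ParRepAux.exit_prob (hMarkov ii hiiN) hS (hQSD ii hiiN)
                (hinit ii hiiN) hsupp hA s0
            · intro j hj1 hj2
              rw [hCs]
              dsimp only
              rw [if_neg (by omega), if_neg (by omega), ParRepAux.preimage_TB, hgdef]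
              exact ParRepAux.tail_prob (hMarkov j hj2) hS (hQSD j hj2)
                (hinit j hj2) hsupp hgi ((mm - 1) * Tpoll)
        _ = g ^ s * hAi := by
            obtain ⟨p, hp⟩ : ∃ p, N = ii + p + 1 := ⟨N - ii - 1, by omega⟩
            have hNp : N - ii - 1 = p := by omega
            have hexp : mm * Tpoll * ii + (tt - 1) + (mm - 1) * Tpoll * (N - ii - 1) = s := by
              rw [hNp, hbmm]
              have l1 : mm * Tpoll * ii = (b + Tpoll) * ii := by rw [hmmT]
              have l2 : (b + Tpoll) * ii = b * ii + Tpoll * ii := add_mul _ _ _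
              have l3 : N * b = (ii + p + 1) * b := by rw [← hp]
              have l4 : (ii + p + 1) * b = ii * b + p * b + b := by ring
              have l5 : ii * Tpoll = Tpoll * ii := mul_comm _ _
              have l6 : b * ii = ii * b := mul_comm _ _
              have l7 : b * p = p * b := mul_comm _ _
              omega
            rw [← pow_mul, ← pow_mul, ← hexp]
            ring
end
end

section
/- The expected contribution to f_sim from a single Parallel Step of ParRep equals (P_ν(X_1 ∉ S)^{-1} − 1) · ∫_S f dν, independently of the number N of replicas and the polling time T_poll. -/
open MeasureTheory ProbabilityTheory Filter
open scoped Classical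

noncomputable section

/-- Auxiliary: pushforward of `P` restricted to `T` under `W` equals `P T • ν`. -/
lemma parrep_aux_map {E Ω : Type*} [MeasurableSpace E] [MeasurableSpace Ω]
    (P : Measure Ω) [IsProbabilityMeasure P]
    (S : Set E) (hS : MeasurableSet S)
    (ν : Measure E) (hν : IsProbabilityMeasure ν) (hsupp : ν Sᶜ = 0)
    (W : Ω → E) (hW : Measurable W) (T : Set Ω) (hT : MeasurableSet T)
    (h : ∀ A : Set E, MeasurableSet A → A ⊆ S → P (W ⁻¹' A ∩ T) = ν A * P T) :
    (P.restrict T).map W = P T • ν := by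
  have hS1 : ν S = 1 := by
    have h1 := measure_add_measure_compl (μ := ν) hS
    rw [hsupp, add_zero] at h1
    simpa using h1
  have hTeq : P (W ⁻¹' S ∩ T) = P T := by
    rw [h S hS subset_rfl, hS1, one_mul]
  have hnull : P (T \ W ⁻¹' S) = 0 := by
    have hd := measure_inter_add_diff (μ := P) T (hW hS)
    have h1 : T ∩ W ⁻¹' S = W ⁻¹' S ∩ T := Set.inter_comm _ _
    rw [h1, hTeq] at hd
    nth_rewrite 2 [← add_zero (P T)] at hd
    exact (ENNReal.add_right_inj (measure_ne_top P T)).mp hd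
  ext A hA
  rw [Measure.map_apply hW hA, Measure.restrict_apply (hW hA), Measure.smul_apply,
    smul_eq_mul]
  have hAS : ν (A ∩ Sᶜ) = 0 := measure_mono_null Set.inter_subset_right hsupp
  have hAeq : ν (A ∩ S) = ν A := by
    have hd := measure_inter_add_diff (μ := ν) A hS
    rw [Set.diff_eq, hAS, add_zero] at hd
    exact hd
  have hd := measure_inter_add_diff (μ := P) (W ⁻¹' A ∩ T) (hW hS)
  have h1 : W ⁻¹' A ∩ T ∩ W ⁻¹' S = W ⁻¹' (A ∩ S) ∩ T := by
    ext ω; simp [Set.mem_inter_iff]; tauto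
  have h2 : P ((W ⁻¹' A ∩ T) \ W ⁻¹' S) = 0 :=
    measure_mono_null (Set.diff_subset_diff_left Set.inter_subset_right) hnull
  rw [h1, h2, add_zero] at hd
  rw [← hd, h (A ∩ S) (hA.inter hS) Set.inter_subset_right, hAeq, mul_comm]

/-- Auxiliary: the integral of `f ∘ W` over `T` is `(P T).toReal * ∫ f dν`. -/
lemma parrep_aux_int {E Ω : Type*} [MeasurableSpace E] [MeasurableSpace Ω]
    (P : Measure Ω) [IsProbabilityMeasure P]
    (S : Set E) (hS : MeasurableSet S)
    (ν : Measure E) (hν : IsProbabilityMeasure ν) (hsupp : ν Sᶜ = 0)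
    (f : E → ℝ) (hf : Measurable f)
    (W : Ω → E) (hW : Measurable W) (T : Set Ω) (hT : MeasurableSet T)
    (h : ∀ A : Set E, MeasurableSet A → A ⊆ S → P (W ⁻¹' A ∩ T) = ν A * P T) :
    ∫ ω in T, f (W ω) ∂P = (P T).toReal * ∫ x, f x ∂ν := by
  rw [← integral_map hW.aemeasurable hf.aestronglyMeasurable,
    parrep_aux_map P S hS ν hν hsupp W hW T hT h, integral_smul_measure, smul_eq_mul]

/-- The expected contribution to `f_sim` from a single Parallel Step
(the sum of `f` along the concatenated trajectory, excluding the final exit point,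
where `τacc` is geometric(`p`) and each time-marginal before exit is `ν`) equals
`(p⁻¹ − 1) ∫_S f dν`, independently of `N` and the polling time. -/
theorem parallel_step_expected_contribution
    {E Ω : Type*} [MeasurableSpace E] [MeasurableSpace Ω]
    (P : Measure Ω) [IsProbabilityMeasure P]
    (S : Set E) (hS : MeasurableSet S)
    (ν : Measure E) (hν : IsProbabilityMeasure ν) (hsupp : ν Sᶜ = 0)
    (f : E → ℝ) (hf : Measurable f) (hbdd : ∃ C, ∀ x, |f x| ≤ C)
    (p : ℝ) (hp0 : 0 < p) (hp1 : p < 1)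
    (τacc : Ω → ℕ) (hτmeas : Measurable τacc)
    (hgeom : ∀ k, 1 ≤ k → (P {ω | τacc ω = k}).toReal = (1 - p) ^ (k - 1) * p)
    (V : ℕ → Ω → E) (hVmeas : ∀ j, Measurable (V j))
    (hmarg : ∀ j, 1 ≤ j → ∀ A : Set E, MeasurableSet A → A ⊆ S →
      P ({ω | V j ω ∈ A} ∩ {ω | j < τacc ω}) = ν A * P {ω | j < τacc ω}) :
    ∫ ω, (∑ j ∈ Finset.Icc 1 (τacc ω - 1), f (V j ω)) ∂P
      = (1 / p - 1) * ∫ x, f x ∂ν := by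
  classical
  obtain ⟨C0, hC0⟩ := hbdd
  set C : ℝ := max C0 0 with hCdef
  have hC : ∀ x, |f x| ≤ C := fun x => le_trans (hC0 x) (le_max_left _ _)
  have hCnn : 0 ≤ C := le_max_right _ _
  set q : ℝ := 1 - p with hqdef
  have hq0 : 0 ≤ q := by simp [hqdef]; linarith
  have hq1 : q < 1 := by simp [hqdef]; linarith
  set I : ℝ := ∫ x, f x ∂ν with hIdef
  -- measurability of the level sets of τacc
  have hTmeas : ∀ j : ℕ, MeasurableSet {ω | j < τacc ω} := fun j =>
    hτmeas measurableSet_Ioi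
  -- the value of P {j < τacc}
  have hTval : ∀ j : ℕ, (P {ω | j < τacc ω}).toReal = q ^ j := by
    intro j
    have hUnion : {ω | j < τacc ω} = ⋃ k : ℕ, {ω | τacc ω = j + 1 + k} := by
      ext ω
      simp only [Set.mem_setOf_eq, Set.mem_iUnion]
      constructor
      · intro h; exact ⟨τacc ω - (j + 1), by omega⟩
      · rintro ⟨k, hk⟩; omega
    have hPT : P {ω | j < τacc ω} = ∑' k : ℕ, P {ω | τacc ω = j + 1 + k} := by
      rw [hUnion]
      exact measure_iUnion
        (fun a b hab => by
          simp only [Function.onFun, Set.disjoint_left, Set.mem_setOf_eq]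
          intro ω h1 h2; omega)
        (fun k => hτmeas (measurableSet_singleton _))
    rw [hPT, ENNReal.tsum_toReal_eq (fun k => measure_ne_top P _)]
    have hterm : ∀ k : ℕ, (P {ω | τacc ω = j + 1 + k}).toReal = q ^ j * (p * q ^ k) := by
      intro k
      rw [hgeom (j + 1 + k) (by omega)]
      have h1 : j + 1 + k - 1 = j + k := by omega
      rw [h1, hqdef, pow_add]; ring
    rw [tsum_congr hterm, tsum_mul_left, tsum_mul_left,
      tsum_geometric_of_lt_one hq0 hq1]
    have hpq : 1 - q = p := by simp [hqdef]
    rw [hpq, mul_inv_cancel₀ hp0.ne', mul_one]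
  -- per-term integral
  have hterm : ∀ j : ℕ, 1 ≤ j →
      ∫ ω, ({ω | j < τacc ω}).indicator (fun ω => f (V j ω)) ω ∂P = q ^ j * I := by
    intro j hj
    rw [integral_indicator (hTmeas j)]
    rw [parrep_aux_int P S hS ν hν hsupp f hf (V j) (hVmeas j) _ (hTmeas j)
      (fun A hA hAS => hmarg j hj A hA hAS), hTval j]
  -- pointwise identification of the finite sum with a tsum
  have hpt : ∀ ω, (∑ j ∈ Finset.Icc 1 (τacc ω - 1), f (V j ω))
      = ∑' n : ℕ, ({ω | n + 1 < τacc ω}).indicator (fun ω => f (V (n + 1) ω)) ω := by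
    intro ω
    rw [tsum_eq_sum (s := Finset.range (τacc ω - 1))
      (f := fun n => ({ω | n + 1 < τacc ω}).indicator (fun ω => f (V (n + 1) ω)) ω)
      (fun n hn => Set.indicator_of_notMem
        (by simp only [Finset.mem_range, not_lt] at hn; simp only [Set.mem_setOf_eq]; omega) _)]
    rw [Finset.sum_congr rfl (fun n hn => Set.indicator_of_mem
      (by simp only [Finset.mem_range] at hn; simp only [Set.mem_setOf_eq]; omega) _)]
    rw [← Finset.Ico_add_one_right_eq_Icc, Finset.sum_Ico_eq_sum_range]
    have h1 : τacc ω - 1 + 1 - 1 = τacc ω - 1 := by omega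
    rw [h1]
    exact Finset.sum_congr rfl (fun n _ => by rw [add_comm])
  -- interchange of sum and integral
  have hASM : ∀ n : ℕ, AEStronglyMeasurable
      (fun ω => ({ω | n + 1 < τacc ω}).indicator (fun ω => f (V (n + 1) ω)) ω) P :=
    fun n => ((hf.comp (hVmeas (n + 1))).indicator (hTmeas (n + 1))).aestronglyMeasurable
  have hbound : ∀ n : ℕ,
      ∫⁻ ω, ‖({ω | n + 1 < τacc ω}).indicator (fun ω => f (V (n + 1) ω)) ω‖₊ ∂P
        ≤ ENNReal.ofReal C * ENNReal.ofReal (q ^ (n + 1)) := by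
    intro n
    have hle : ∀ ω : Ω,
        (↑‖({ω | n + 1 < τacc ω}).indicator (fun ω => f (V (n + 1) ω)) ω‖₊ : ENNReal)
          ≤ ({ω | n + 1 < τacc ω}).indicator (fun _ => ENNReal.ofReal C) ω := by
      intro ω
      by_cases hω : ω ∈ {ω | n + 1 < τacc ω}
      · rw [Set.indicator_of_mem hω, Set.indicator_of_mem hω]
        rw [← ENNReal.ofReal_coe_nnreal, coe_nnnorm]
        exact ENNReal.ofReal_le_ofReal (by rw [Real.norm_eq_abs]; exact hC _)
      · rw [Set.indicator_of_notMem hω, Set.indicator_of_notMem hω]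
        simp
    calc ∫⁻ ω, ‖({ω | n + 1 < τacc ω}).indicator (fun ω => f (V (n + 1) ω)) ω‖₊ ∂P
        ≤ ∫⁻ ω, ({ω | n + 1 < τacc ω}).indicator (fun _ => ENNReal.ofReal C) ω ∂P :=
          lintegral_mono hle
      _ = ENNReal.ofReal C * P {ω | n + 1 < τacc ω} := by
          rw [lintegral_indicator (hTmeas (n + 1)), setLIntegral_const]
      _ = ENNReal.ofReal C * ENNReal.ofReal (q ^ (n + 1)) := by
          congr 1
          rw [← ENNReal.ofReal_toReal (measure_ne_top P _), hTval (n + 1)]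
  have hsummable : Summable (fun n : ℕ => q ^ (n + 1)) := by
    have := summable_geometric_of_lt_one hq0 hq1
    exact (this.mul_left q).congr (fun n => (pow_succ' q n).symm)
  have hfin : (∑' n : ℕ,
      ∫⁻ ω, ‖({ω | n + 1 < τacc ω}).indicator (fun ω => f (V (n + 1) ω)) ω‖₊ ∂P) ≠ ⊤ := by
    refine ne_top_of_le_ne_top ?_ (ENNReal.tsum_le_tsum hbound)
    rw [ENNReal.tsum_mul_left]
    rw [← ENNReal.ofReal_tsum_of_nonneg (fun n => pow_nonneg hq0 _) hsummable]
    exact ENNReal.mul_ne_top ENNReal.ofReal_ne_top ENNReal.ofReal_ne_top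
  calc ∫ ω, (∑ j ∈ Finset.Icc 1 (τacc ω - 1), f (V j ω)) ∂P
      = ∫ ω, (∑' n : ℕ, ({ω | n + 1 < τacc ω}).indicator (fun ω => f (V (n + 1) ω)) ω) ∂P := by
        exact integral_congr_ae (Filter.Eventually.of_forall hpt)
    _ = ∑' n : ℕ, ∫ ω, ({ω | n + 1 < τacc ω}).indicator (fun ω => f (V (n + 1) ω)) ω ∂P :=
        integral_tsum hASM hfin
    _ = ∑' n : ℕ, q ^ (n + 1) * I :=
        tsum_congr (fun n => hterm (n + 1) (by omega))
    _ = (∑' n : ℕ, q ^ (n + 1)) * I := tsum_mul_right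
    _ = (q * (1 - q)⁻¹) * I := by
        congr 1
        rw [tsum_congr (fun n : ℕ => pow_succ' q n), tsum_mul_left,
          tsum_geometric_of_lt_one hq0 hq1]
    _ = (1 / p - 1) * I := by
        have hpq : 1 - q = p := by simp [hqdef]
        rw [hpq]
        field_simp
        rw [hqdef]; ring
end
end

section
/- For a Harris chain (Z_n) with auxiliary chain (Z̄_n), and f bounded measurable on Σ with f̄ defined on Σ ∪ {σ} by f̄ = f on Σ and f̄(σ) = ∫_B f dρ, one has E_ξ[f(Z_n)] = E_{ξ̄}[f̄(Z̄_n)] for every initial distribution ξ on Σ (extended to ξ̄ with ξ̄(σ) = 0) and every n ≥ 0. -/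
open MeasureTheory ProbabilityTheory Filter
open scoped Classical

noncomputable section

section Aux

open ProbabilityTheory

lemma integrable_of_bdd {α : Type*} [MeasurableSpace α] {μ : Measure α} [IsFiniteMeasure μ]
    {f : α → ℝ} (hf : Measurable f) {C : ℝ} (hC : ∀ x, |f x| ≤ C) : Integrable f μ :=
  (integrable_const C).mono' hf.aestronglyMeasurable
    (Filter.Eventually.of_forall fun x => by simpa [Real.norm_eq_abs] using hC x)

lemma bind_eq_map_snd {α β : Type*} [MeasurableSpace α] [MeasurableSpace β]
    (μ : Measure α) [SFinite μ] (κ : Kernel α β) [IsSFiniteKernel κ] :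
    μ.bind κ = (μ ⊗ₘ κ).map Prod.snd := by
  ext s hs
  rw [Measure.bind_apply hs κ.measurable.aemeasurable, Measure.map_apply measurable_snd hs,
    Measure.compProd_apply (measurable_snd hs)]
  rfl

lemma integral_bind_bdd {α β : Type*} [MeasurableSpace α] [MeasurableSpace β]
    (μ : Measure α) [IsProbabilityMeasure μ] (κ : Kernel α β) [IsMarkovKernel κ]
    {f : β → ℝ} (hf : Measurable f) {C : ℝ} (hC : ∀ x, |f x| ≤ C) :
    ∫ y, f y ∂(μ.bind κ) = ∫ x, ∫ y, f y ∂(κ x) ∂μ := by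
  rw [bind_eq_map_snd μ κ,
    integral_map measurable_snd.aemeasurable hf.aestronglyMeasurable]
  exact Measure.integral_compProd
    (integrable_of_bdd (hf.comp measurable_snd) (fun x => hC x.2))

lemma measurable_sum_unit {α : Type*} [MeasurableSpace α] {f : α ⊕ Unit → ℝ}
    (h : Measurable (fun x => f (Sum.inl x))) : Measurable f := by
  refine measurable_fun_sum h ?_
  have h2 : (f ∘ Sum.inr) = fun _ => f (Sum.inr ()) := funext fun u => by cases u; rfl
  rw [h2]; exact measurable_const

lemma isProb_iter {α : Type*} [MeasurableSpace α] (κ : Kernel α α) [IsMarkovKernel κ]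
    (μ0 : Measure α) (h0 : IsProbabilityMeasure μ0) (n : ℕ) :
    IsProbabilityMeasure (ParRep.iterMeasure κ μ0 n) := by
  induction n with
  | zero => exact h0
  | succ n ih =>
    constructor
    rw [show ParRep.iterMeasure κ μ0 (n + 1)
        = (ParRep.iterMeasure κ μ0 n).bind (fun a => κ a) from rfl,
      Measure.bind_apply MeasurableSet.univ κ.measurable.aemeasurable]
    simp [ih.measure_univ]

end Aux


/-- For a Harris chain with kernel `κ` and auxiliary (split) chain
kernel `κbar`, and `f` bounded measurable with `f̄ = f` on `σ` and `f̄(atom) = ∫_B f dρ`,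
one has `E_ξ[f (Z n)] = E_{ξ̄}[f̄ (Z̄ n)]` for every initial distribution `ξ` and `n`. -/
theorem auxiliary_chain_expectation
    {σ : Type*} [MeasurableSpace σ] [StandardBorelSpace σ]
    (κ : ProbabilityTheory.Kernel σ σ) (hκ : ProbabilityTheory.IsMarkovKernel κ)
    (ε : ℝ) (A B : Set σ) (hA : MeasurableSet A) (hB : MeasurableSet B)
    (ρ : Measure σ) (hHarris : ParRep.IsHarris κ ε A B ρ)
    (κbar : ProbabilityTheory.Kernel (σ ⊕ Unit) (σ ⊕ Unit))
    (hκbar : ProbabilityTheory.IsMarkovKernel κbar)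
    (haux : ParRep.IsAuxKernel κ A ε ρ κbar)
    (f : σ → ℝ) (hf : Measurable f) (hbdd : ∃ C, ∀ x, |f x| ≤ C)
    (fbar : σ ⊕ Unit → ℝ)
    (hfbar : ∀ x : σ, fbar (Sum.inl x) = f x)
    (hfatom : fbar (Sum.inr ()) = ∫ x, f x ∂ρ) :
    ∀ (ξ : Measure σ), IsProbabilityMeasure ξ → ∀ n : ℕ,
      ∫ x, f x ∂(ParRep.iterMeasure κ ξ n)
        = ∫ y, fbar y ∂(ParRep.iterMeasure κbar (ξ.map Sum.inl) n) := by
  obtain ⟨hε, hρ, hρB, -, hmin⟩ := hHarris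
  obtain ⟨haux1, haux2, haux3⟩ := haux
  haveI : IsProbabilityMeasure ρ := hρ
  have hσ : Nonempty σ := by
    by_contra h
    rw [not_nonempty_iff] at h
    have h1 := hρ.measure_univ
    rw [Set.univ_eq_empty_iff.2 h] at h1
    simp at h1
  -- minorization as a measure inequality
  have hle : ∀ x ∈ A, (ENNReal.ofReal ε) • ρ ≤ κ x := by
    intro x hx
    refine Measure.le_iff.2 fun s hs => ?_
    have h1 : ρ s ≤ ρ (s ∩ B) := by
      calc ρ s = ρ ((s ∩ B) ∪ (s ∩ Bᶜ)) := by rw [Set.inter_union_compl]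
        _ ≤ ρ (s ∩ B) + ρ (s ∩ Bᶜ) := measure_union_le _ _
        _ = ρ (s ∩ B) := by
            rw [measure_mono_null Set.inter_subset_right hρB, add_zero]
    calc ((ENNReal.ofReal ε) • ρ) s = ENNReal.ofReal ε * ρ s := by
          simp [Measure.smul_apply]
      _ ≤ ENNReal.ofReal ε * ρ (s ∩ B) := mul_le_mul_right h1 _
      _ ≤ κ x (s ∩ B) := hmin x hx _ (hs.inter hB) Set.inter_subset_right
      _ ≤ κ x s := measure_mono Set.inter_subset_left
  suffices h : ∀ n : ℕ, ∀ f : σ → ℝ, Measurable f → (∃ C, ∀ x, |f x| ≤ C) →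
      ∀ fbar : σ ⊕ Unit → ℝ, (∀ x, fbar (Sum.inl x) = f x) →
        fbar (Sum.inr ()) = ∫ x, f x ∂ρ →
      ∀ ξ : Measure σ, IsProbabilityMeasure ξ →
      ∫ x, f x ∂(ParRep.iterMeasure κ ξ n)
        = ∫ y, fbar y ∂(ParRep.iterMeasure κbar (ξ.map Sum.inl) n) by
    intro ξ hξ n
    exact h n f hf hbdd fbar hfbar hfatom ξ hξ
  intro n
  induction n with
  | zero =>
    intro f hf hbdd fbar hfb hfa ξ hξ
    have hfbarm : Measurable fbar := by
      refine measurable_sum_unit ?_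
      have h1 : (fun x => fbar (Sum.inl x)) = f := funext hfb
      rw [h1]; exact hf
    simp only [ParRep.iterMeasure]
    rw [integral_map measurable_inl.aemeasurable hfbarm.aestronglyMeasurable]
    simp [hfb]
  | succ n ih =>
    intro f hf hbdd fbar hfb hfa ξ hξ
    obtain ⟨C, hC⟩ := hbdd
    have hC0 : 0 ≤ C := le_trans (abs_nonneg _) (hC hσ.some)
    have hfbarm : Measurable fbar := by
      refine measurable_sum_unit ?_
      have h1 : (fun x => fbar (Sum.inl x)) = f := funext hfb
      rw [h1]; exact hf
    set Cb : ℝ := max C |∫ x, f x ∂ρ| with hCb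
    have hfbC : ∀ y, |fbar y| ≤ Cb := by
      rintro (x | u)
      · rw [hfb x]; exact le_trans (hC x) (le_max_left _ _)
      · cases u
        rw [hfa]; exact le_max_right _ _
    -- the one-step averaged functions
    set g : σ → ℝ := fun x => ∫ y, f y ∂(κ x) with hgdef
    have hgm : Measurable g :=
      (MeasureTheory.StronglyMeasurable.integral_kernel_prod_right'
        ((hf.comp measurable_snd).stronglyMeasurable
          : StronglyMeasurable fun p : σ × σ => f p.2)).measurable
    have hgC : ∀ x, |g x| ≤ C := by
      intro x
      have h1 :
          ‖∫ y, f y ∂(κ x)‖ ≤ C * ((κ x) Set.univ).toReal :=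
        norm_integral_le_of_norm_le_const
          (Filter.Eventually.of_forall fun y => by simpa [Real.norm_eq_abs] using hC y)
      simpa [Real.norm_eq_abs, measure_univ] using h1
    have hεafin : IsFiniteMeasure ((ENNReal.ofReal ε) • ρ) := by
      constructor
      simp [Measure.smul_apply, hρ.measure_univ, ENNReal.ofReal_lt_top]
    have hintρ : ∫ z, f z ∂((ENNReal.ofReal ε) • ρ) = ε * ∫ x, f x ∂ρ := by
      rw [integral_smul_measure, ENNReal.toReal_ofReal hε.le, smul_eq_mul]
    -- key pointwise identity on the auxiliary kernel
    have hinl : ∀ x, ∫ z, fbar z ∂(κbar (Sum.inl x)) = g x := by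
      intro x
      by_cases hx : x ∈ A
      · rw [haux2 x hx]
        haveI hfind : IsFiniteMeasure
            ((ENNReal.ofReal ε) • Measure.dirac (Sum.inr () : σ ⊕ Unit)) := by
          constructor
          simp [Measure.smul_apply, ENNReal.ofReal_lt_top]
        rw [integral_add_measure (integrable_of_bdd hfbarm hfbC)
          (integrable_of_bdd hfbarm hfbC)]
        rw [integral_map measurable_inl.aemeasurable hfbarm.aestronglyMeasurable]
        simp only [hfb]
        rw [integral_smul_measure, integral_dirac' _ _ hfbarm.stronglyMeasurable,
          ENNReal.toReal_ofReal hε.le, hfa]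
        have hsub := Measure.sub_add_cancel_of_le (hle x hx)
        have hsplit : ∫ z, f z ∂(κ x)
            = ∫ z, f z ∂((κ x) - (ENNReal.ofReal ε) • ρ)
              + ∫ z, f z ∂((ENNReal.ofReal ε) • ρ) := by
          rw [← integral_add_measure (integrable_of_bdd hf hC)
            (integrable_of_bdd hf hC), hsub]
        rw [hintρ] at hsplit
        have : g x = ∫ z, f z ∂(κ x) := rfl
        rw [this, hsplit, smul_eq_mul]
      · rw [haux1 x hx,
          integral_map measurable_inl.aemeasurable hfbarm.aestronglyMeasurable]
        simp only [hfb]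
        rfl
    have hatom : ∫ z, fbar z ∂(κbar (Sum.inr ())) = ∫ x, g x ∂ρ := by
      have hbind : ρ.bind (fun x => κbar (Sum.inl x))
          = ρ.bind (κbar.comap Sum.inl measurable_inl) := by
        exact congrArg _ (funext fun x => rfl)
      rw [haux3, hbind, integral_bind_bdd ρ _ hfbarm hfbC]
      exact integral_congr_ae (Filter.Eventually.of_forall fun x => hinl x)
    set gbar : σ ⊕ Unit → ℝ := Sum.elim g (fun _ => ∫ x, g x ∂ρ) with hgbar
    have hky : ∀ y, ∫ z, fbar z ∂(κbar y) = gbar y := by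
      rintro (x | u)
      · exact hinl x
      · cases u; exact hatom
    haveI hP1 : IsProbabilityMeasure (ParRep.iterMeasure κ ξ n) :=
      isProb_iter κ ξ hξ n
    haveI hPξ : IsProbabilityMeasure (ξ.map Sum.inl) :=
      Measure.isProbabilityMeasure_map (measurable_inl : Measurable (Sum.inl : σ → σ ⊕ Unit)).aemeasurable
    haveI hP2 : IsProbabilityMeasure (ParRep.iterMeasure κbar (ξ.map Sum.inl) n) :=
      isProb_iter κbar _ hPξ n
    have hL : ∫ x, f x ∂(ParRep.iterMeasure κ ξ (n + 1))
        = ∫ x, g x ∂(ParRep.iterMeasure κ ξ n) := by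
      rw [show ParRep.iterMeasure κ ξ (n + 1)
          = (ParRep.iterMeasure κ ξ n).bind (fun a => κ a) from rfl]
      exact integral_bind_bdd _ κ hf hC
    have hR : ∫ y, fbar y ∂(ParRep.iterMeasure κbar (ξ.map Sum.inl) (n + 1))
        = ∫ y, gbar y ∂(ParRep.iterMeasure κbar (ξ.map Sum.inl) n) := by
      rw [show ParRep.iterMeasure κbar (ξ.map Sum.inl) (n + 1)
          = (ParRep.iterMeasure κbar (ξ.map Sum.inl) n).bind (fun a => κbar a) from rfl]
      rw [integral_bind_bdd _ κbar hfbarm hfbC]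
      exact integral_congr_ae (Filter.Eventually.of_forall fun y => hky y)
    rw [hL, hR]
    exact ih g hgm ⟨C, hgC⟩ gbar (fun x => rfl) rfl ξ hξ
end
end
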